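/- arXiv:math/9906058 — 4 statements merged into one kernel-verified Lean document; each statement's English description precedes it below -/
import Mathlib

section
/- Let n ≥ 2 be an integer and let r ∈ (−1, 1). Then the Cauchy principal value integral ⨍_{−1}^{1} U_n(s)·(1−s²)^{3/2}/(s−r) ds exists and equals (π/4)·[T_{n−1}(r) − 2·T_{n+1}(r) + T_{n+3}(r)]. -/
open Polynomial Polynomial.Chebyshev Real Set Filter intervalIntegral Topology

set_option maxHeartbeats 1000000

namespace CPVaux

noncomputable def g (k : ℤ) (s : ℝ) : ℝ := (U ℝ k).eval s * Real.sqrt (1 - s^2)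
noncomputable def f (r : ℝ) (k : ℤ) (s : ℝ) : ℝ := g k s / (s - r)
noncomputable def Phi (r : ℝ) (k : ℤ) (ε : ℝ) : ℝ :=
  (∫ s in (-1:ℝ)..(r-ε), f r k s) + ∫ s in (r+ε)..(1:ℝ), f r k s
noncomputable def Gam (r : ℝ) (k : ℤ) (ε : ℝ) : ℝ :=
  (∫ s in (-1:ℝ)..(r-ε), g k s) + ∫ s in (r+ε)..(1:ℝ), g k s

lemma cont_g (k : ℤ) : Continuous (g k) :=
  ((U ℝ k).continuous_aeval).mul (Real.continuous_sqrt.comp (by continuity))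

lemma ne_left {r s : ℝ} (hr1 : -1 < r) {ε : ℝ} (hε : 0 < ε)
    (hs : s ∈ uIcc (-1 : ℝ) (r - ε)) : s - r ≠ 0 := by
  have h1 : s ≤ max (-1 : ℝ) (r - ε) := hs.2
  have : s < r := lt_of_le_of_lt h1 (max_lt hr1 (by linarith))
  intro h; linarith [sub_eq_zero.mp h]

lemma ne_right {r s : ℝ} (hr2 : r < 1) {ε : ℝ} (hε : 0 < ε)
    (hs : s ∈ uIcc (r + ε) (1 : ℝ)) : s - r ≠ 0 := by
  have h1 : min (r + ε) (1 : ℝ) ≤ s := hs.1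
  have : r < s := lt_of_lt_of_le (lt_min (by linarith) hr2) h1
  intro h; linarith [sub_eq_zero.mp h]

lemma contOn_f_left (r : ℝ) (hr1 : -1 < r) (k : ℤ) {ε : ℝ} (hε : 0 < ε) :
    ContinuousOn (f r k) (uIcc (-1 : ℝ) (r - ε)) :=
  ((cont_g k).continuousOn).div ((continuous_id.sub continuous_const).continuousOn)
    (fun _ hs => ne_left hr1 hε hs)

lemma contOn_f_right (r : ℝ) (hr2 : r < 1) (k : ℤ) {ε : ℝ} (hε : 0 < ε) :
    ContinuousOn (f r k) (uIcc (r + ε) (1 : ℝ)) :=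
  ((cont_g k).continuousOn).div ((continuous_id.sub continuous_const).continuousOn)
    (fun _ hs => ne_right hr2 hε hs)

/-- recurrence -/
lemma Phi_rec (r : ℝ) (hr1 : -1 < r) (hr2 : r < 1) (k : ℤ) {ε : ℝ} (hε : 0 < ε) :
    Phi r (k + 2) ε = 2 * Gam r (k+1) ε + 2 * r * Phi r (k+1) ε - Phi r k ε := by
  have key : ∀ s : ℝ, s - r ≠ 0 →
      f r (k+2) s = 2 * g (k+1) s + 2 * r * f r (k+1) s - f r k s := by
    intro s hs
    have hU : (U ℝ (k+2)).eval s = 2*s*(U ℝ (k+1)).eval s - (U ℝ k).eval s := by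
      rw [U_add_two]; simp
    simp only [f, g]
    rw [hU]; field_simp; ring
  have hL : (∫ s in (-1:ℝ)..(r-ε), f r (k+2) s)
      = 2 * (∫ s in (-1:ℝ)..(r-ε), g (k+1) s) + 2 * r * (∫ s in (-1:ℝ)..(r-ε), f r (k+1) s)
        - ∫ s in (-1:ℝ)..(r-ε), f r k s := by
    rw [show (∫ s in (-1:ℝ)..(r-ε), f r (k+2) s)
        = ∫ s in (-1:ℝ)..(r-ε), (2 * g (k+1) s + 2 * r * f r (k+1) s - f r k s) from
      integral_congr (fun s hs => key s (ne_left hr1 hε hs))]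
    rw [integral_sub, integral_add, integral_const_mul, integral_const_mul]
    · exact (((cont_g (k+1)).continuousOn).intervalIntegrable).const_mul 2
    · exact ((contOn_f_left r hr1 (k+1) hε).intervalIntegrable).const_mul (2*r)
    · exact (((cont_g (k+1)).continuousOn).intervalIntegrable).const_mul 2 |>.add
        (((contOn_f_left r hr1 (k+1) hε).intervalIntegrable).const_mul (2*r))
    · exact (contOn_f_left r hr1 k hε).intervalIntegrable
  have hR : (∫ s in (r+ε)..(1:ℝ), f r (k+2) s)
      = 2 * (∫ s in (r+ε)..(1:ℝ), g (k+1) s) + 2 * r * (∫ s in (r+ε)..(1:ℝ), f r (k+1) s)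
        - ∫ s in (r+ε)..(1:ℝ), f r k s := by
    rw [show (∫ s in (r+ε)..(1:ℝ), f r (k+2) s)
        = ∫ s in (r+ε)..(1:ℝ), (2 * g (k+1) s + 2 * r * f r (k+1) s - f r k s) from
      integral_congr (fun s hs => key s (ne_right hr2 hε hs))]
    rw [integral_sub, integral_add, integral_const_mul, integral_const_mul]
    · exact (((cont_g (k+1)).continuousOn).intervalIntegrable).const_mul 2
    · exact ((contOn_f_right r hr2 (k+1) hε).intervalIntegrable).const_mul (2*r)
    · exact (((cont_g (k+1)).continuousOn).intervalIntegrable).const_mul 2 |>.add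
        (((contOn_f_right r hr2 (k+1) hε).intervalIntegrable).const_mul (2*r))
    · exact (contOn_f_right r hr2 k hε).intervalIntegrable
  simp only [Phi, Gam]
  rw [hL, hR]; ring

lemma Gam_tendsto (r : ℝ) (k : ℤ) :
    Tendsto (Gam r k) (nhdsWithin 0 (Set.Ioi 0)) (𝓝 (∫ s in (-1:ℝ)..1, g k s)) := by
  have hint : ∀ a b : ℝ, IntervalIntegrable (g k) MeasureTheory.volume a b :=
    fun a b => ((cont_g k).intervalIntegrable a b)
  have hP : Continuous (fun x => ∫ s in (-1:ℝ)..x, g k s) :=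
    intervalIntegral.continuous_primitive hint (-1)
  have heq : ∀ ε : ℝ, Gam r k ε = (∫ s in (-1:ℝ)..(r-ε), g k s)
      + ((∫ s in (-1:ℝ)..1, g k s) - ∫ s in (-1:ℝ)..(r+ε), g k s) := by
    intro ε
    have := integral_add_adjacent_intervals (hint (-1) (r+ε)) (hint (r+ε) 1)
    simp only [Gam]; linarith
  have h1 : Tendsto (fun ε : ℝ => (∫ s in (-1:ℝ)..(r-ε), g k s)
      + ((∫ s in (-1:ℝ)..1, g k s) - ∫ s in (-1:ℝ)..(r+ε), g k s)) (𝓝 0)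
      (𝓝 ((∫ s in (-1:ℝ)..r, g k s) + ((∫ s in (-1:ℝ)..1, g k s) - ∫ s in (-1:ℝ)..r, g k s))) := by
    apply Tendsto.add
    · exact (hP.tendsto r).comp (by
        simpa using (tendsto_const_nhds.sub tendsto_id :
          Tendsto (fun ε : ℝ => r - ε) (𝓝 0) (𝓝 (r - 0))))
    · exact tendsto_const_nhds.sub ((hP.tendsto r).comp (by
        simpa using (tendsto_const_nhds.add tendsto_id :
          Tendsto (fun ε : ℝ => r + ε) (𝓝 0) (𝓝 (r + 0)))))
  have h2 : Tendsto (fun ε : ℝ => (∫ s in (-1:ℝ)..(r-ε), g k s)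
      + ((∫ s in (-1:ℝ)..1, g k s) - ∫ s in (-1:ℝ)..(r+ε), g k s)) (𝓝[>] (0:ℝ))
      (𝓝 ((∫ s in (-1:ℝ)..r, g k s) + ((∫ s in (-1:ℝ)..1, g k s) - ∫ s in (-1:ℝ)..r, g k s))) :=
    h1.mono_left nhdsWithin_le_nhds
  simpa using h2.congr (fun ε => (heq ε).symm)

lemma J_zero : (∫ s in (-1:ℝ)..1, g 0 s) = π / 2 := by
  simp only [g, U_zero, Polynomial.eval_one, one_mul]
  simpa using integral_sqrt_one_sub_sq

lemma polyJ (k : ℤ) :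
    ((k:ℝ[X])+3) * (X * U ℝ k - (1-X^2) * Polynomial.derivative (U ℝ k))
      - ((k:ℝ[X])+1) * (X * U ℝ (k+2) - (1-X^2) * Polynomial.derivative (U ℝ (k+2)))
    = 2*((k:ℝ[X])+1)*((k:ℝ[X])+3)*((1-X^2) * U ℝ (k+1)) := by
  have h1 := add_one_mul_T_eq_poly_in_U (R := ℝ) k
  have h2 := add_one_mul_T_eq_poly_in_U (R := ℝ) (k+2)
  have h3 := one_sub_X_sq_mul_U_eq_pol_in_T ℝ (k+1)
  have h4 := T_mul_T ℝ (k+2) 1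
  rw [show (k+2+1 : ℤ) = k+3 from by ring] at h2 h4
  rw [show (k+1+1 : ℤ) = k+2 from by ring, show (k+1+2 : ℤ) = k+3 from by ring] at h3
  rw [show (k+2-1 : ℤ) = k+1 from by ring, T_one] at h4
  push_cast at h1 h2
  linear_combination (norm := ring_nf) (-(k:ℝ[X])-3)*h1 + ((k:ℝ[X])+1)*h2
    - 2*((k:ℝ[X])+1)*((k:ℝ[X])+3)*h3 - ((k:ℝ[X])+1)*((k:ℝ[X])+3)*h4

lemma J_pos (k : ℕ) : (∫ s in (-1:ℝ)..1, g (k+1) s) = 0 := by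
  set A : ℝ → ℝ := fun s => -(1/2) * (Real.sqrt (1-s^2) *
    ((U ℝ k).eval s / (k+1) - (U ℝ (k+2)).eval s / (k+3))) with hA
  have hk1 : ((k:ℝ)+1) ≠ 0 := by positivity
  have hk3 : ((k:ℝ)+3) ≠ 0 := by positivity
  have hder : ∀ x ∈ Ioo (-1:ℝ) 1, HasDerivAt A (g (k+1) x) x := by
    intro x hx
    have hx2 : (0:ℝ) < 1 - x^2 := by nlinarith [hx.1, hx.2]
    have hw0 : Real.sqrt (1-x^2) ≠ 0 := by positivity
    have hw2 : Real.sqrt (1-x^2)^2 = 1 - x^2 := Real.sq_sqrt hx2.le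
    have hsq : HasDerivAt (fun s : ℝ => Real.sqrt (1-s^2)) ((-2*x)/(2*Real.sqrt (1-x^2))) x := by
      have h1 : HasDerivAt (fun s : ℝ => 1 - s^2) (-2*x) x := by
        simpa using ((hasDerivAt_pow 2 x).const_sub 1)
      simpa using h1.sqrt (by positivity)
    have hp1 : HasDerivAt (fun s => (U ℝ k).eval s) ((Polynomial.derivative (U ℝ k)).eval x) x :=
      (U ℝ k).hasDerivAt x
    have hp2 : HasDerivAt (fun s => (U ℝ (k+2)).eval s)
        ((Polynomial.derivative (U ℝ (k+2))).eval x) x := (U ℝ (k+2)).hasDerivAt x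
    have hB : HasDerivAt (fun s => (U ℝ k).eval s / (k+1) - (U ℝ (k+2)).eval s / (k+3))
        ((Polynomial.derivative (U ℝ k)).eval x / (k+1)
          - (Polynomial.derivative (U ℝ (k+2))).eval x / (k+3)) x :=
      (hp1.div_const _).sub (hp2.div_const _)
    have hAd := ((hsq.mul hB).const_mul (-(1/2) : ℝ))
    have heq : (-(1/2):ℝ) * ((-2*x)/(2*Real.sqrt (1-x^2)) *
          ((U ℝ k).eval x / (k+1) - (U ℝ (k+2)).eval x / (k+3))
        + Real.sqrt (1-x^2) * ((Polynomial.derivative (U ℝ k)).eval x / (k+1)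
          - (Polynomial.derivative (U ℝ (k+2))).eval x / (k+3))) = g (k+1) x := by
      have hPe := congrArg (Polynomial.eval x) (polyJ (k:ℤ))
      simp only [Polynomial.eval_mul, Polynomial.eval_add, Polynomial.eval_sub,
        Polynomial.eval_one, Polynomial.eval_pow, Polynomial.eval_X, Polynomial.eval_intCast,
        Polynomial.eval_ofNat] at hPe
      push_cast at hPe
      rw [← hw2] at hPe
      simp only [g]
      set a := (U ℝ (k:ℤ)).eval x
      set b := (U ℝ ((k:ℤ)+1)).eval x
      set c := (U ℝ ((k:ℤ)+2)).eval x
      set da := (Polynomial.derivative (U ℝ (k:ℤ))).eval x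
      set dc := (Polynomial.derivative (U ℝ ((k:ℤ)+2))).eval x
      set w := Real.sqrt (1-x^2)
      calc -(1/2:ℝ) * ((-2*x)/(2*w) * (a/(k+1) - c/(k+3)) + w * (da/(k+1) - dc/(k+3)))
          = (((k:ℝ)+3)*(x*a - w^2*da) - ((k:ℝ)+1)*(x*c - w^2*dc))
              / (2*((k:ℝ)+1)*((k:ℝ)+3)*w) := by
            field_simp
            ring
        _ = (2*((k:ℝ)+1)*((k:ℝ)+3)*(w^2*b)) / (2*((k:ℝ)+1)*((k:ℝ)+3)*w) := by rw [hPe]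
        _ = b * w := by
            rw [div_eq_iff (by positivity)]
            ring
    exact heq ▸ hAd
  have hcontA : ContinuousOn A (Icc (-1:ℝ) 1) := by
    apply Continuous.continuousOn
    exact continuous_const.mul ((Real.continuous_sqrt.comp (by continuity)).mul
      (((U ℝ k).continuous_aeval.div_const _).sub ((U ℝ (k+2)).continuous_aeval.div_const _)))
  rw [integral_eq_sub_of_hasDeriv_right_of_le (by norm_num) hcontA
      (fun x hx => (hder x hx).hasDerivWithinAt) ((cont_g (k+1)).intervalIntegrable _ _)]
  have h1 : Real.sqrt (1 - (1:ℝ)^2) = 0 := by norm_num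
  have h2 : Real.sqrt (1 - (-1:ℝ)^2) = 0 := by norm_num
  simp [hA, h1, h2]

lemma Phi_zero (r : ℝ) (hr1 : -1 < r) (hr2 : r < 1) :
    Tendsto (Phi r 0) (nhdsWithin 0 (Set.Ioi 0)) (𝓝 (-π * r)) := by
  set c : ℝ := Real.sqrt (1 - r^2) with hcdef
  have hr2' : (0:ℝ) < 1 - r^2 := by nlinarith
  have hc : 0 < c := Real.sqrt_pos.mpr hr2'
  have hc2 : c^2 = 1 - r^2 := Real.sq_sqrt hr2'.le
  set D : ℝ → ℝ := fun s => 1 - r*s + c * Real.sqrt (1-s^2) with hDdef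
  have hD_cont : Continuous D := by
    apply Continuous.add
    · exact continuous_const.sub (continuous_const.mul continuous_id)
    · exact continuous_const.mul (Real.continuous_sqrt.comp (by continuity))
  have hD_pos : ∀ s ∈ Icc (-1:ℝ) 1, 0 < D s := by
    intro s hs
    have h1 : r * s ≤ |r| * |s| := by
      calc r * s ≤ |r * s| := le_abs_self _
        _ = |r| * |s| := abs_mul r s
    have h2 : |s| ≤ 1 := abs_le.mpr ⟨hs.1, hs.2⟩
    have h3 : |r| < 1 := abs_lt.mpr ⟨hr1, hr2⟩
    have h4 : r * s < 1 := by nlinarith [abs_nonneg r, abs_nonneg s]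
    have h5 : 0 ≤ c * Real.sqrt (1 - s^2) := by positivity
    simp only [hDdef]; nlinarith
  set H : ℝ → ℝ := fun s => c * (Real.log (s - r) - Real.log (D s))
      + Real.sqrt (1-s^2) - r * Real.arcsin s with hHdef
  -- continuity of H away from r
  have hH_cont : ∀ s ∈ Icc (-1:ℝ) 1, s ≠ r → ContinuousAt H s := by
    intro s hs hsr
    have h1 : ContinuousAt (fun s : ℝ => Real.log (s - r)) s :=
      ContinuousAt.log ((continuous_id.sub continuous_const).continuousAt) (sub_ne_zero.mpr hsr)
    have h2 : ContinuousAt (fun s : ℝ => Real.log (D s)) s :=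
      ContinuousAt.log hD_cont.continuousAt (hD_pos s hs).ne' 
    exact (((h1.sub h2).const_mul c).add
      ((Real.continuous_sqrt.comp (by continuity)).continuousAt)).sub
      ((Real.continuous_arcsin.continuousAt).const_mul r)
  -- derivative of H
  have hH_deriv : ∀ s ∈ Ioo (-1:ℝ) 1, s ≠ r → HasDerivAt H (f r 0 s) s := by
    intro s hs hsr
    have hs2 : (0:ℝ) < 1 - s^2 := by nlinarith [hs.1, hs.2]
    set w : ℝ := Real.sqrt (1-s^2) with hwdef
    have hw : 0 < w := Real.sqrt_pos.mpr hs2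
    have hw2 : w^2 = 1 - s^2 := Real.sq_sqrt hs2.le
    have hsr0 : s - r ≠ 0 := sub_ne_zero.mpr hsr
    have hD0 : D s ≠ 0 := (hD_pos s (Ioo_subset_Icc_self hs)).ne'
    have hsqrt : HasDerivAt (fun s : ℝ => Real.sqrt (1-s^2)) ((-2*s)/(2*w)) s := by
      have h1 : HasDerivAt (fun s : ℝ => 1 - s^2) (-2*s) s := by
        simpa using ((hasDerivAt_pow 2 s).const_sub 1)
      simpa [hwdef] using h1.sqrt hs2.ne'
    have hlog1 : HasDerivAt (fun s : ℝ => Real.log (s - r)) (1 / (s-r)) s := by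
      simpa using ((hasDerivAt_id s).sub_const r).log hsr0
    have hDd : HasDerivAt D (-r + c * ((-2*s)/(2*w))) s := by
      have h1 : HasDerivAt (fun s : ℝ => 1 - r*s) (-r) s := by
        simpa using ((hasDerivAt_id s).const_mul r).const_sub 1
      exact h1.add (hsqrt.const_mul c)
    have hlog2 : HasDerivAt (fun s : ℝ => Real.log (D s))
        ((-r + c * ((-2*s)/(2*w))) / D s) s := hDd.log hD0
    have harc : HasDerivAt (fun s : ℝ => Real.arcsin s) (1 / Real.sqrt (1 - s^2)) s :=
      Real.hasDerivAt_arcsin (by intro h; rw [h] at hs; exact absurd hs.1 (by norm_num))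
        (by intro h; rw [h] at hs; exact absurd hs.2 (by norm_num))
    have hH : HasDerivAt H
        (c * (1/(s-r) - (-r + c * ((-2*s)/(2*w))) / D s) + (-2*s)/(2*w)
          - r * (1 / Real.sqrt (1 - s^2))) s :=
      (((hlog1.sub hlog2).const_mul c).add hsqrt).sub (harc.const_mul r)
    have heq : c * (1/(s-r) - (-r + c * ((-2*s)/(2*w))) / D s) + (-2*s)/(2*w)
          - r * (1 / Real.sqrt (1 - s^2)) = f r 0 s := by
      rw [show f r 0 s = w / (s - r) from by simp [f, g, hwdef]]
      rw [← hwdef]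
      have hnum : c*(D s)*w + c*(r*w+c*s)*(s-r) - (s+r)*(s-r)*(D s) = w^2*(D s) := by
        simp only [hDdef, ← hwdef]
        linear_combination (r*s - c*w + c^2 - 1)*hw2 + (1-r*s)*hc2
      calc c * (1/(s-r) - (-r + c * ((-2*s)/(2*w))) / D s) + (-2*s)/(2*w) - r * (1/w)
          = (c*(D s)*w + c*(r*w+c*s)*(s-r) - (s+r)*(s-r)*(D s)) / (w * D s * (s-r)) := by
            field_simp
            ring
        _ = (w^2*(D s)) / (w * D s * (s-r)) := by rw [hnum]
        _ = w / (s-r) := by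
            field_simp
    exact heq ▸ hH
  -- endpoint values
  have hHm1 : H (-1) = r * π / 2 := by
    have h1 : Real.sqrt (1 - (-1:ℝ)^2) = 0 := by norm_num
    have h2 : D (-1) = 1 + r := by simp [hDdef, h1]
    have h3 : Real.log ((-1:ℝ) - r) = Real.log (1 + r) := by
      rw [show ((-1:ℝ) - r) = -(1+r) from by ring, Real.log_neg_eq_log]
    simp [hHdef, h1, h2, h3, Real.arcsin_neg_one]
    ring
  have hH1 : H 1 = -(r * π / 2) := by
    have h1 : Real.sqrt (1 - (1:ℝ)^2) = 0 := by norm_num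
    have h2 : D 1 = 1 - r := by simp [hDdef, h1]
    simp [hHdef, h1, h2, Real.arcsin_one]
    ring
  -- FTC on both sides
  have hFTC : ∀ ε ∈ Ioo (0:ℝ) (min (1-r) (1+r)),
      Phi r 0 ε = H (r-ε) - H (r+ε) + -π * r := by
    intro ε hε
    obtain ⟨hε0, hεm⟩ := hε
    have hε1 : ε < 1 - r := lt_of_lt_of_le hεm (min_le_left _ _)
    have hε2 : ε < 1 + r := lt_of_lt_of_le hεm (min_le_right _ _)
    have hab1 : (-1:ℝ) ≤ r - ε := by linarith
    have hab2 : r + ε ≤ 1 := by linarith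
    have hI1 : (∫ s in (-1:ℝ)..(r-ε), f r 0 s) = H (r-ε) - H (-1) := by
      apply integral_eq_sub_of_hasDeriv_right_of_le hab1
      · intro x hx
        exact (hH_cont x ⟨hx.1, by linarith [hx.2]⟩
          (ne_of_lt (by linarith [hx.2]))).continuousWithinAt
      · intro x hx
        exact (hH_deriv x ⟨hx.1, by linarith [hx.2]⟩
          (ne_of_lt (by linarith [hx.2]))).hasDerivWithinAt
      · exact (contOn_f_left r hr1 0 hε0).intervalIntegrable
    have hI2 : (∫ s in (r+ε)..(1:ℝ), f r 0 s) = H 1 - H (r+ε) := by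
      apply integral_eq_sub_of_hasDeriv_right_of_le hab2
      · intro x hx
        exact (hH_cont x ⟨by linarith [hx.1], hx.2⟩
          (ne_of_gt (by linarith [hx.1]))).continuousWithinAt
      · intro x hx
        exact (hH_deriv x ⟨by linarith [hx.1], hx.2⟩
          (ne_of_gt (by linarith [hx.1]))).hasDerivWithinAt
      · exact (contOn_f_right r hr2 0 hε0).intervalIntegrable
    simp only [Phi]
    rw [hI1, hI2, hHm1, hH1]; ring
  -- the difference term tends to zero
  have hHdiff : ∀ ε : ℝ, H (r-ε) - H (r+ε) =
      c * (Real.log (D (r+ε)) - Real.log (D (r-ε)))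
      + (Real.sqrt (1-(r-ε)^2) - Real.sqrt (1-(r+ε)^2))
      - r * (Real.arcsin (r-ε) - Real.arcsin (r+ε)) := by
    intro ε
    have h3 : Real.log (r - ε - r) = Real.log (r + ε - r) := by
      rw [show r - ε - r = -ε from by ring, show r + ε - r = ε from by ring,
        Real.log_neg_eq_log]
    simp only [hHdef]
    rw [h3]; ring
  have t1 : Tendsto (fun ε : ℝ => r - ε) (𝓝 0) (𝓝 r) := by
    simpa using (tendsto_const_nhds.sub tendsto_id :
      Tendsto (fun ε : ℝ => r - ε) (𝓝 0) (𝓝 (r - 0)))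
  have t2 : Tendsto (fun ε : ℝ => r + ε) (𝓝 0) (𝓝 r) := by
    simpa using (tendsto_const_nhds.add tendsto_id :
      Tendsto (fun ε : ℝ => r + ε) (𝓝 0) (𝓝 (r + 0)))
  have hlogD : Tendsto (fun x : ℝ => Real.log (D x)) (𝓝 r) (𝓝 (Real.log (D r))) :=
    (ContinuousAt.log hD_cont.continuousAt (hD_pos r ⟨hr1.le, hr2.le⟩).ne').tendsto
  have hsqc : Continuous (fun x : ℝ => Real.sqrt (1-x^2)) :=
    Real.continuous_sqrt.comp (continuous_const.sub (continuous_pow 2))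
  have big : Tendsto (fun ε : ℝ => c * (Real.log (D (r+ε)) - Real.log (D (r-ε)))
      + (Real.sqrt (1-(r-ε)^2) - Real.sqrt (1-(r+ε)^2))
      - r * (Real.arcsin (r-ε) - Real.arcsin (r+ε))) (𝓝 0)
      (𝓝 (c * (Real.log (D r) - Real.log (D r))
        + (Real.sqrt (1-r^2) - Real.sqrt (1-r^2))
        - r * (Real.arcsin r - Real.arcsin r))) := by
    refine Tendsto.sub (Tendsto.add ?_ ?_) ?_
    · exact ((hlogD.comp t2).sub (hlogD.comp t1)).const_mul c
    · exact ((hsqc.continuousAt.tendsto.comp t1).sub (hsqc.continuousAt.tendsto.comp t2))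
    · exact ((Real.continuous_arcsin.continuousAt.tendsto.comp t1).sub
        (Real.continuous_arcsin.continuousAt.tendsto.comp t2)).const_mul r
  have big0 : Tendsto (fun ε : ℝ => H (r-ε) - H (r+ε)) (𝓝 0) (𝓝 0) := by
    have := big.congr (fun ε => (hHdiff ε).symm)
    simpa using this
  have hmem : Ioo (0:ℝ) (min (1-r) (1+r)) ∈ nhdsWithin (0:ℝ) (Set.Ioi 0) :=
    Ioo_mem_nhdsGT_of_mem ⟨le_refl 0, lt_min (by linarith) (by linarith)⟩
  have heven : (fun ε : ℝ => H (r-ε) - H (r+ε) + -π * r) =ᶠ[nhdsWithin (0:ℝ) (Set.Ioi 0)]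
      Phi r 0 := eventually_of_mem hmem (fun ε hε => (hFTC ε hε).symm)
  have final : Tendsto (fun ε : ℝ => H (r-ε) - H (r+ε) + -π * r)
      (nhdsWithin (0:ℝ) (Set.Ioi 0)) (𝓝 (-π * r)) := by
    have h : Tendsto (fun ε : ℝ => H (r-ε) - H (r+ε)) (nhdsWithin (0:ℝ) (Set.Ioi 0)) (𝓝 0) :=
      big0.mono_left nhdsWithin_le_nhds
    simpa using h.add_const (-π * r)
  exact final.congr' heven

lemma Phi_neg_one (r : ℝ) : ∀ ε : ℝ, Phi r (-1) ε = 0 := by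
  intro ε; simp [Phi, f, g, U_neg_one]

lemma Phi_tendsto (r : ℝ) (hr1 : -1 < r) (hr2 : r < 1) (m : ℕ) :
    Tendsto (Phi r m) (nhdsWithin 0 (Set.Ioi 0)) (𝓝 (-π * (T ℝ ((m:ℤ)+1)).eval r)) := by
  induction m using Nat.twoStepInduction with
  | zero =>
    have h := Phi_zero r hr1 hr2
    have heq : -π * r = -π * (T ℝ (((0:ℕ):ℤ)+1)).eval r := by
      norm_num [T_one]
    rw [← heq]; exact h
  | one =>
    have key : ∀ ε ∈ Set.Ioi (0:ℝ), 2 * Gam r 0 ε + 2*r*Phi r 0 ε - Phi r (-1) ε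
        = Phi r ((1:ℕ):ℤ) ε := by
      intro ε hε
      have h := Phi_rec r hr1 hr2 (-1) (hε : (0:ℝ) < ε)
      norm_num at h ⊢
      rw [h]
    have hG := Gam_tendsto r 0
    rw [J_zero] at hG
    have hlim : Tendsto (fun ε => 2 * Gam r 0 ε + 2*r*Phi r 0 ε - Phi r (-1) ε)
        (nhdsWithin 0 (Set.Ioi 0)) (𝓝 (2 * (π/2) + 2*r*(-π*r) - 0)) := by
      refine Tendsto.sub (Tendsto.add (hG.const_mul 2) ((Phi_zero r hr1 hr2).const_mul (2*r))) ?_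
      exact (tendsto_const_nhds : Tendsto (fun _ : ℝ => (0:ℝ))
        (nhdsWithin 0 (Set.Ioi 0)) (𝓝 0)).congr (fun ε => (Phi_neg_one r ε).symm)
    have heq : 2 * (π/2) + 2*r*(-π*r) - 0 = -π * (T ℝ (((1:ℕ):ℤ)+1)).eval r := by
      norm_num [T_two]; ring
    rw [heq] at hlim
    exact hlim.congr' (eventually_of_mem self_mem_nhdsWithin key)
  | more n ih1 ih2 =>
    have key : ∀ ε ∈ Set.Ioi (0:ℝ), 2 * Gam r ((n:ℤ)+1) ε + 2*r*Phi r ((n:ℤ)+1) ε - Phi r n ε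
        = Phi r ((n+2:ℕ):ℤ) ε := by
      intro ε hε
      have h := Phi_rec r hr1 hr2 n (hε : (0:ℝ) < ε)
      rw [show (((n+2:ℕ)):ℤ) = (n:ℤ)+2 from by push_cast; ring, h]
    have hG := Gam_tendsto r (((n+1:ℕ)):ℤ)
    push_cast at hG
    rw [J_pos n] at hG
    have ih2' := ih2
    push_cast at ih2' 
    have hlim : Tendsto (fun ε => 2 * Gam r ((n:ℤ)+1) ε + 2*r*Phi r ((n:ℤ)+1) ε - Phi r n ε)
        (nhdsWithin 0 (Set.Ioi 0))
        (𝓝 (2 * 0 + 2*r*(-π * (T ℝ ((n:ℤ)+1+1)).eval r) - (-π * (T ℝ ((n:ℤ)+1)).eval r))) :=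
      Tendsto.sub (Tendsto.add (hG.const_mul 2) (ih2'.const_mul (2*r))) ih1
    have heq : 2 * 0 + 2*r*(-π * (T ℝ ((n:ℤ)+1+1)).eval r) - (-π * (T ℝ ((n:ℤ)+1)).eval r)
        = -π * (T ℝ (((n+2:ℕ):ℤ)+1)).eval r := by
      have hT := congrArg (Polynomial.eval r) (T_add_two ℝ ((n:ℤ)+1))
      simp only [Polynomial.eval_mul, Polynomial.eval_sub, Polynomial.eval_ofNat,
        Polynomial.eval_X] at hT
      rw [show (((n+2:ℕ)):ℤ)+1 = (n:ℤ)+1+2 from by push_cast; ring, hT]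
      ring
    rw [heq] at hlim
    exact hlim.congr' (eventually_of_mem self_mem_nhdsWithin key)

lemma poly_decomp (k : ℤ) :
    4*((1-Polynomial.X^2) * U ℝ k) = 2 * U ℝ k - U ℝ (k-2) - U ℝ (k+2) := by
  have h1 := U_add_two ℝ k
  have h2 := U_sub_two ℝ k
  have h3 := U_add_one ℝ k
  linear_combination (norm := ring_nf) h1 + h2 + 2*(Polynomial.X : ℝ[X])*h3

lemma integrand_eq (r : ℝ) (n : ℤ) {s : ℝ} (hs1 : -1 ≤ s) (hs2 : s ≤ 1)
    (hsr : s - r ≠ 0) :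
    (U ℝ n).eval s * (1 - s^2) ^ ((3:ℝ)/2) / (s - r)
      = (2 * f r n s - f r (n-2) s - f r (n+2) s)/4 := by
  have h0 : (0:ℝ) ≤ 1 - s^2 := by nlinarith
  have h32 : (1-s^2) ^ ((3:ℝ)/2) = (1-s^2) * Real.sqrt (1-s^2) := by
    rw [show ((3:ℝ)/2) = 1 + 1/2 from by norm_num, Real.rpow_add' h0 (by norm_num),
      Real.rpow_one, Real.sqrt_eq_rpow]
  have hd := congrArg (Polynomial.eval s) (poly_decomp n)
  simp only [Polynomial.eval_mul, Polynomial.eval_sub, Polynomial.eval_one,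
    Polynomial.eval_pow, Polynomial.eval_X, Polynomial.eval_ofNat] at hd
  simp only [f, g]
  rw [h32]
  set w := Real.sqrt (1-s^2)
  set e := (U ℝ n).eval s
  set em := (U ℝ (n-2)).eval s
  set ep := (U ℝ (n+2)).eval s
  calc e * ((1-s^2)*w)/(s-r) = ((2*(e*w) - em*w - ep*w)/4)/(s-r) := by
        rw [show e*((1-s^2)*w) = (2*(e*w) - em*w - ep*w)/4 from by linear_combination (w/4)*hd]
    _ = (2*(e*w/(s-r)) - em*w/(s-r) - ep*w/(s-r))/4 := by ring

end CPVaux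



open CPVaux in
/-- For an integer `n ≥ 2` and `r ∈ (-1, 1)`, the Cauchy principal value
integral `⨍_{-1}^{1} U_n(s) (1-s²)^{3/2}/(s-r) ds` exists and equals
`(π/4) (T_{n-1}(r) - 2 T_{n+1}(r) + T_{n+3}(r))`. -/
theorem cpv_U_m2 (n : ℕ) (hn : 2 ≤ n) (r : ℝ) (hr : r ∈ Set.Ioo (-1 : ℝ) 1) :
    Filter.Tendsto
      (fun ε : ℝ =>
        (∫ s in (-1 : ℝ)..(r - ε),
            (Polynomial.Chebyshev.U ℝ n).eval s * (1 - s ^ 2) ^ ((3 : ℝ) / 2) / (s - r)) +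
        ∫ s in (r + ε)..(1 : ℝ),
            (Polynomial.Chebyshev.U ℝ n).eval s * (1 - s ^ 2) ^ ((3 : ℝ) / 2) / (s - r))
      (nhdsWithin 0 (Set.Ioi 0))
      (nhds (Real.pi / 4 *
        ((Polynomial.Chebyshev.T ℝ ((n : ℤ) - 1)).eval r -
         2 * (Polynomial.Chebyshev.T ℝ ((n : ℤ) + 1)).eval r +
         (Polynomial.Chebyshev.T ℝ ((n : ℤ) + 3)).eval r))) := by
  obtain ⟨hr1, hr2⟩ := hr
  have h1 := Phi_tendsto r hr1 hr2 n
  have h2 := Phi_tendsto r hr1 hr2 (n-2)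
  have h3 := Phi_tendsto r hr1 hr2 (n+2)
  rw [show ((n-2:ℕ):ℤ) = (n:ℤ)-2 from by omega] at h2
  rw [show ((n:ℤ)-2+1) = (n:ℤ)-1 from by ring] at h2
  push_cast at h3
  rw [show ((n:ℤ)+2+1) = (n:ℤ)+3 from by ring] at h3
  have hcomb := (((h1.const_mul 2).sub h2).sub h3).div_const 4
  have hval : (2 * (-π * (T ℝ ((n:ℤ)+1)).eval r) - (-π * (T ℝ ((n:ℤ)-1)).eval r)
      - (-π * (T ℝ ((n:ℤ)+3)).eval r))/4
      = π / 4 * ((T ℝ ((n:ℤ)-1)).eval r - 2 * (T ℝ ((n:ℤ)+1)).eval r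
        + (T ℝ ((n:ℤ)+3)).eval r) := by ring
  rw [hval] at hcomb
  refine hcomb.congr' ?_
  have hmem : Ioo (0:ℝ) (min (1-r) (1+r)) ∈ nhdsWithin (0:ℝ) (Set.Ioi 0) :=
    Ioo_mem_nhdsGT_of_mem ⟨le_refl 0, lt_min (by linarith) (by linarith)⟩
  filter_upwards [hmem] with ε hε
  obtain ⟨hε0, hεm⟩ := hε
  have hε1 : ε < 1 - r := lt_of_lt_of_le hεm (min_le_left _ _)
  have hε2 : ε < 1 + r := lt_of_lt_of_le hεm (min_le_right _ _)
  have hL : (∫ s in (-1:ℝ)..(r-ε), (U ℝ (n:ℤ)).eval s * (1-s^2)^((3:ℝ)/2)/(s-r))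
      = (2*(∫ s in (-1:ℝ)..(r-ε), f r n s) - (∫ s in (-1:ℝ)..(r-ε), f r ((n:ℤ)-2) s)
        - (∫ s in (-1:ℝ)..(r-ε), f r ((n:ℤ)+2) s))/4 := by
    rw [show (∫ s in (-1:ℝ)..(r-ε), (U ℝ (n:ℤ)).eval s * (1-s^2)^((3:ℝ)/2)/(s-r))
        = ∫ s in (-1:ℝ)..(r-ε), (2 * f r n s - f r ((n:ℤ)-2) s - f r ((n:ℤ)+2) s)/4 from
      integral_congr (fun s hs => by
        rw [uIcc_of_le (by linarith : (-1:ℝ) ≤ r-ε)] at hs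
        exact integrand_eq r n hs.1 (by linarith [hs.2])
          (sub_ne_zero.mpr (ne_of_lt (by linarith [hs.2]))))]
    rw [integral_div, integral_sub, integral_sub, integral_const_mul]
    · exact ((contOn_f_left r hr1 n hε0).intervalIntegrable).const_mul 2
    · exact (contOn_f_left r hr1 ((n:ℤ)-2) hε0).intervalIntegrable
    · exact (((contOn_f_left r hr1 n hε0).intervalIntegrable).const_mul 2).sub
        ((contOn_f_left r hr1 ((n:ℤ)-2) hε0).intervalIntegrable)
    · exact (contOn_f_left r hr1 ((n:ℤ)+2) hε0).intervalIntegrable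
  have hR : (∫ s in (r+ε)..(1:ℝ), (U ℝ (n:ℤ)).eval s * (1-s^2)^((3:ℝ)/2)/(s-r))
      = (2*(∫ s in (r+ε)..(1:ℝ), f r n s) - (∫ s in (r+ε)..(1:ℝ), f r ((n:ℤ)-2) s)
        - (∫ s in (r+ε)..(1:ℝ), f r ((n:ℤ)+2) s))/4 := by
    rw [show (∫ s in (r+ε)..(1:ℝ), (U ℝ (n:ℤ)).eval s * (1-s^2)^((3:ℝ)/2)/(s-r))
        = ∫ s in (r+ε)..(1:ℝ), (2 * f r n s - f r ((n:ℤ)-2) s - f r ((n:ℤ)+2) s)/4 from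
      integral_congr (fun s hs => by
        rw [uIcc_of_le (by linarith : r+ε ≤ (1:ℝ))] at hs
        exact integrand_eq r n (by linarith [hs.1]) hs.2
          (sub_ne_zero.mpr (ne_of_gt (by linarith [hs.1]))))]
    rw [integral_div, integral_sub, integral_sub, integral_const_mul]
    · exact ((contOn_f_right r hr2 n hε0).intervalIntegrable).const_mul 2
    · exact (contOn_f_right r hr2 ((n:ℤ)-2) hε0).intervalIntegrable
    · exact (((contOn_f_right r hr2 n hε0).intervalIntegrable).const_mul 2).sub
        ((contOn_f_right r hr2 ((n:ℤ)-2) hε0).intervalIntegrable)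
    · exact (contOn_f_right r hr2 ((n:ℤ)+2) hε0).intervalIntegrable
  show (2 * Phi r n ε - Phi r ((n:ℤ)-2) ε - Phi r ((n:ℤ)+2) ε)/4 = _
  simp only [Phi]
  rw [hL, hR]
  ring
end

section
/- Let m ≥ 2 and n ≥ 2m − 2 be integers and let r ∈ (−1, 1). Then the Cauchy principal value integral ⨍_{−1}^{1} U_n(s)·(1−s²)^{m−1/2}/(s−r) ds exists and equals π·(−1)^m·(1/2)^{2m−2} · Σ_{j=0}^{2m−2} (−1)^j · C(2m−2, j) · T_{n+3−2m+2j}(r), where C(2m−2, j) denotes the binomial coefficient. -/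
open Real Polynomial Polynomial.Chebyshev MeasureTheory intervalIntegral Filter Set Finset

noncomputable def evU (t : ℤ) (s : ℝ) : ℝ := (Polynomial.Chebyshev.U ℝ t).eval s

lemma evU_add_two (t : ℤ) (s : ℝ) : evU (t+2) s = 2*s*evU (t+1) s - evU t s := by
  unfold evU; rw [Polynomial.Chebyshev.U_add_two]; simp

lemma evU_zero (s : ℝ) : evU 0 s = 1 := by
  unfold evU; rw [Polynomial.Chebyshev.U_zero]; simp

lemma evU_neg_one (s : ℝ) : evU (-1) s = 0 := by
  unfold evU; rw [Polynomial.Chebyshev.U_neg_one]; simp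

lemma ddiff (k : ℕ) (r s : ℝ) :
    (s - r) * (∑ i ∈ range k, 2 * evU ((k:ℤ)-1-i) r * evU i s) = evU k s - evU k r := by
  set A : ℕ → ℝ := fun i : ℕ => evU i s * evU ((k:ℤ)-i) r - evU ((i:ℤ)-1) s * evU ((k:ℤ)-1-i) r
    with hAdef
  have hA : ∀ i ∈ range k, (s - r) * (2 * evU ((k:ℤ)-1-i) r * evU i s) = A (i+1) - A i := by
    intro i _
    have hU : evU ((i:ℤ)+1) s = 2*s*evU i s - evU ((i:ℤ)-1) s := by
      have := evU_add_two ((i:ℤ)-1) s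
      rw [show (i:ℤ)-1+2 = (i:ℤ)+1 by ring, show (i:ℤ)-1+1 = (i:ℤ) by ring] at this
      exact this
    have hu : evU ((k:ℤ)-i) r = 2*r*evU ((k:ℤ)-1-i) r - evU ((k:ℤ)-2-i) r := by
      have := evU_add_two ((k:ℤ)-2-i) r
      rw [show (k:ℤ)-2-i+2 = (k:ℤ)-i by ring, show (k:ℤ)-2-i+1 = (k:ℤ)-1-i by ring] at this
      exact this
    simp only [hAdef]
    push_cast
    rw [show (i:ℤ)+1-1 = (i:ℤ) by ring, show (k:ℤ)-((i:ℤ)+1) = (k:ℤ)-1-i by ring,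
      show (k:ℤ)-1-((i:ℤ)+1) = (k:ℤ)-2-i by ring]
    linear_combination (-(evU ((k:ℤ)-1-i) r))*hU + (evU i s)*hu
  calc (s - r) * (∑ i ∈ range k, 2 * evU ((k:ℤ)-1-i) r * evU i s)
      = ∑ i ∈ range k, (s - r) * (2 * evU ((k:ℤ)-1-i) r * evU i s) := Finset.mul_sum _ _ _
    _ = ∑ i ∈ range k, (A (i+1) - A i) := Finset.sum_congr rfl hA
    _ = A k - A 0 := Finset.sum_range_sub A k
    _ = evU k s - evU k r := by
        simp only [hAdef]
        push_cast
        rw [show (k:ℤ)-1-(k:ℤ) = -1 by ring, show (k:ℤ)-(k:ℤ) = 0 by ring,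
          evU_zero, evU_neg_one, evU_neg_one, evU_zero]
        ring

lemma evU_cont (t : ℤ) : Continuous (evU t) :=
  Polynomial.continuous (Polynomial.Chebyshev.U ℝ t)

lemma sqrt1s_cont : Continuous (fun s : ℝ => Real.sqrt (1 - s^2)) :=
  Real.continuous_sqrt.comp (continuous_const.sub (continuous_pow 2))

lemma evU_sq (t : ℤ) (s : ℝ) :
    4*(s^2-1) * evU t s = evU (t+2) s - 2*evU t s + evU (t-2) s := by
  have h1 := evU_add_two t s
  have h2 := evU_add_two (t-1) s
  have h3 := evU_add_two (t-2) s
  have e2 : t - 1 + 2 = t + 1 := by ring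
  have e3 : t - 2 + 2 = t := by ring
  have e4 : t - 1 + 1 = t := by ring
  have e5 : t - 2 + 1 = t - 1 := by ring
  rw [e2, e4] at h2
  rw [e3, e5] at h3
  linear_combination (-1)*h1 - (2*s)*h2 - h3

lemma conv1 (N : ℕ) (g : ℕ → ℝ) :
    ∑ j ∈ range (N+1), (-1:ℝ)^j * (N.choose j : ℝ) * (g j - g (j+1))
      = ∑ j ∈ range (N+2), (-1:ℝ)^j * ((N+1).choose j : ℝ) * g j := by
  have hR := Finset.sum_range_succ' (fun j => (-1:ℝ)^j * ((N+1).choose j : ℝ) * g j) (N+1)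
  have hA := Finset.sum_range_succ' (fun j => (-1:ℝ)^j * (N.choose j : ℝ) * g j) N
  have hS := Finset.sum_range_succ (fun j => (-1:ℝ)^j * (N.choose (j+1) : ℝ) * g (j+1)) N
  -- rewrite the shifted term in hR using Pascal
  have hPascal : ∀ j : ℕ, (-1:ℝ)^(j+1) * ((N+1).choose (j+1) : ℝ) * g (j+1)
      = -((-1:ℝ)^j * (N.choose j : ℝ) * g (j+1)) - ((-1:ℝ)^j * (N.choose (j+1) : ℝ) * g (j+1)) := by
    intro j
    rw [Nat.choose_succ_succ]
    push_cast
    ring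
  have h1 : ∑ j ∈ range (N+1), (-1:ℝ)^(j+1) * ((N+1).choose (j+1) : ℝ) * g (j+1)
      = -(∑ j ∈ range (N+1), (-1:ℝ)^j * (N.choose j : ℝ) * g (j+1))
        - ∑ j ∈ range (N+1), (-1:ℝ)^j * (N.choose (j+1) : ℝ) * g (j+1) := by
    rw [← Finset.sum_neg_distrib, ← Finset.sum_sub_distrib]
    exact Finset.sum_congr rfl (fun j _ => hPascal j)
  have h2 : ∀ j : ℕ, (-1:ℝ)^(j+1) * (N.choose (j+1) : ℝ) * g (j+1)
      = -((-1:ℝ)^j * (N.choose (j+1) : ℝ) * g (j+1)) := by intro j; ring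
  have h3 : ∑ j ∈ range N, (-1:ℝ)^(j+1) * (N.choose (j+1) : ℝ) * g (j+1)
      = -∑ j ∈ range N, (-1:ℝ)^j * (N.choose (j+1) : ℝ) * g (j+1) := by
    rw [← Finset.sum_neg_distrib]
    exact Finset.sum_congr rfl (fun j _ => h2 j)
  have htop : ((-1:ℝ)^N * (N.choose (N+1) : ℝ) * g (N+1)) = 0 := by
    rw [Nat.choose_succ_self]; simp
  have hLHS : ∑ j ∈ range (N+1), (-1:ℝ)^j * (N.choose j : ℝ) * (g j - g (j+1))
      = ∑ j ∈ range (N+1), (-1:ℝ)^j * (N.choose j : ℝ) * g j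
        - ∑ j ∈ range (N+1), (-1:ℝ)^j * (N.choose j : ℝ) * g (j+1) := by
    rw [← Finset.sum_sub_distrib]
    exact Finset.sum_congr rfl (fun j _ => by ring)
  simp only [pow_zero, Nat.choose_zero_right, Nat.cast_one, one_mul, mul_one] at hR hA
  rw [hLHS, hR, h1, hA, h3] at *
  rw [hS, htop] at *
  ring

lemma conv2 (N : ℕ) (g : ℕ → ℝ) :
    ∑ j ∈ range (N+1), (-1:ℝ)^j * (N.choose j : ℝ) * (g (j+2) - 2*g (j+1) + g j)
      = ∑ j ∈ range (N+3), (-1:ℝ)^j * ((N+2).choose j : ℝ) * g j := by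
  have h1 := conv1 N (fun j => g j - g (j+1))
  have h2 := conv1 (N+1) g
  calc ∑ j ∈ range (N+1), (-1:ℝ)^j * (N.choose j : ℝ) * (g (j+2) - 2*g (j+1) + g j)
      = ∑ j ∈ range (N+1), (-1:ℝ)^j * (N.choose j : ℝ)
          * ((fun j => g j - g (j+1)) j - (fun j => g j - g (j+1)) (j+1)) :=
        Finset.sum_congr rfl (fun j _ => by simp only []; ring)
    _ = ∑ j ∈ range (N+2), (-1:ℝ)^j * ((N+1).choose j : ℝ) * (g j - g (j+1)) := h1
    _ = ∑ j ∈ range (N+1+2), (-1:ℝ)^j * ((N+1+1).choose j : ℝ) * g j := h2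
    _ = ∑ j ∈ range (N+3), (-1:ℝ)^j * ((N+2).choose j : ℝ) * g j := by norm_num

lemma lemE (p : ℕ) (w : ℤ) (s : ℝ) :
    (s^2-1)^p * evU (w + 2*p) s
      = (4:ℝ)⁻¹^p * ∑ j ∈ range (2*p+1), (-1:ℝ)^j * ((2*p).choose j : ℝ) * evU (w + 2*j) s := by
  induction p generalizing w with
  | zero => simp
  | succ p ih =>
    have key : ∀ j : ℕ, (s^2-1) * evU (w + 2 + 2*j) s
        = 4⁻¹ * (evU (w + 2*((j+2 : ℕ) : ℤ)) s - 2 * evU (w + 2*((j+1 : ℕ) : ℤ)) s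
            + evU (w + 2*(j : ℤ)) s) := by
      intro j
      have h := evU_sq (w + 2 + 2*j) s
      have e1 : w + 2 + 2*(j:ℤ) + 2 = w + 2*(((j+2:ℕ)):ℤ) := by push_cast; ring
      have e3 : w + 2 + 2*(j:ℤ) - 2 = w + 2*(j:ℤ) := by ring
      have e2 : w + 2 + 2*(j:ℤ) = w + 2*(((j+1:ℕ)):ℤ) := by push_cast; ring
      rw [e1, e3] at h
      rw [e2] at h ⊢
      linarith
    have hconv := conv2 (2*p) (fun i => evU (w + 2*(i : ℤ)) s)
    have hstart : (s^2-1)^(p+1) * evU (w + 2*((p:ℤ)+1)) s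
        = (s^2-1) * ((s^2-1)^p * evU ((w+2) + 2*p) s) := by
      rw [show w + 2*((p:ℤ)+1) = (w+2) + 2*(p:ℤ) by ring]
      ring
    calc (s^2-1)^(p+1) * evU (w + 2*((p+1 : ℕ) : ℤ)) s
        = (s^2-1) * ((s^2-1)^p * evU ((w+2) + 2*p) s) := by push_cast; rw [← hstart]
      _ = (s^2-1) * ((4:ℝ)⁻¹^p * ∑ j ∈ range (2*p+1),
            (-1:ℝ)^j * ((2*p).choose j : ℝ) * evU ((w+2) + 2*j) s) := by rw [ih]
      _ = (4:ℝ)⁻¹^p * ∑ j ∈ range (2*p+1),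
            (-1:ℝ)^j * ((2*p).choose j : ℝ) * ((s^2-1) * evU (w + 2 + 2*j) s) := by
          rw [mul_left_comm, Finset.mul_sum]
          congr 1
          exact Finset.sum_congr rfl (fun j _ => by ring)
      _ = (4:ℝ)⁻¹^p * ∑ j ∈ range (2*p+1), 4⁻¹ * ((-1:ℝ)^j * ((2*p).choose j : ℝ)
            * (evU (w + 2*((j+2 : ℕ) : ℤ)) s - 2 * evU (w + 2*((j+1 : ℕ) : ℤ)) s
               + evU (w + 2*(j : ℤ)) s)) := by
          congr 1
          exact Finset.sum_congr rfl (fun j _ => by rw [key j]; ring)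
      _ = (4:ℝ)⁻¹^(p+1) * ∑ j ∈ range (2*p+1), (-1:ℝ)^j * ((2*p).choose j : ℝ)
            * (evU (w + 2*((j+2 : ℕ) : ℤ)) s - 2 * evU (w + 2*((j+1 : ℕ) : ℤ)) s
               + evU (w + 2*(j : ℤ)) s) := by
          rw [← Finset.mul_sum]
          ring
      _ = (4:ℝ)⁻¹^(p+1) * ∑ j ∈ range (2*p+3), (-1:ℝ)^j * ((2*p+2).choose j : ℝ)
            * evU (w + 2*(j : ℤ)) s := by rw [hconv]
      _ = (4:ℝ)⁻¹^(p+1) * ∑ j ∈ range (2*(p+1)+1), (-1:ℝ)^j * ((2*(p+1)).choose j : ℝ)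
            * evU (w + 2*(j : ℤ)) s := by norm_num [show 2*(p+1)+1 = 2*p+3 by ring, show 2*(p+1) = 2*p+2 by ring]

lemma moment (i : ℕ) :
    (∫ s in (-1:ℝ)..1, evU i s * Real.sqrt (1 - s^2)) = if i = 0 then π/2 else 0 := by
  have hg : Continuous (fun s : ℝ => evU i s * Real.sqrt (1 - s^2)) :=
    (evU_cont i).mul sqrt1s_cont
  have hcv := intervalIntegral.integral_comp_smul_deriv (a := 0) (b := π)
    (f := Real.cos) (f' := fun θ => -Real.sin θ) (g := fun s => evU i s * Real.sqrt (1 - s^2))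
    (fun θ _ => Real.hasDerivAt_cos θ) (Real.continuous_sin.neg.continuousOn) hg
  rw [Real.cos_zero, Real.cos_pi] at hcv
  have h1 : (∫ s in (-1:ℝ)..1, evU i s * Real.sqrt (1 - s^2))
      = ∫ θ in (0:ℝ)..π, Real.sin θ * (evU i (Real.cos θ) * Real.sqrt (1 - Real.cos θ^2)) := by
    rw [intervalIntegral.integral_symm 1 (-1:ℝ), ← hcv, ← intervalIntegral.integral_neg]
    apply intervalIntegral.integral_congr
    intro θ _
    simp only [smul_eq_mul, Function.comp]
    ring
  rw [h1]
  have h2 : ∀ θ ∈ Set.uIcc (0:ℝ) π,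
      Real.sin θ * (evU i (Real.cos θ) * Real.sqrt (1 - Real.cos θ^2))
        = (Real.cos ((i:ℝ)*θ) - Real.cos (((i:ℝ)+2)*θ))/2 := by
    intro θ hθ
    rw [Set.uIcc_of_le Real.pi_pos.le] at hθ
    have hsin : 0 ≤ Real.sin θ := Real.sin_nonneg_of_nonneg_of_le_pi hθ.1 hθ.2
    have hs : Real.sqrt (1 - Real.cos θ^2) = Real.sin θ := by
      rw [show (1:ℝ) - Real.cos θ^2 = Real.sin θ^2 by
        have := Real.sin_sq_add_cos_sq θ; linarith]
      exact Real.sqrt_sq hsin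
    rw [hs]
    have hU : evU i (Real.cos θ) * Real.sin θ = Real.sin (((i:ℝ)+1)*θ) := by
      have := Polynomial.Chebyshev.U_real_cos θ (i:ℤ)
      unfold evU
      push_cast at this ⊢
      exact this
    have h3 := Real.cos_sub (((i:ℝ)+1)*θ) θ
    have h4 := Real.cos_add (((i:ℝ)+1)*θ) θ
    rw [show ((i:ℝ)+1)*θ - θ = (i:ℝ)*θ by ring] at h3
    rw [show ((i:ℝ)+1)*θ + θ = ((i:ℝ)+2)*θ by ring] at h4
    nlinarith [hU, h3, h4]
  rw [intervalIntegral.integral_congr h2]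
  have hInt : ∀ c : ℝ, c ≠ 0 → (∫ θ in (0:ℝ)..π, Real.cos (c*θ)) = Real.sin (c*π)/c := by
    intro c hc
    rw [intervalIntegral.integral_comp_mul_left (fun x => Real.cos x) hc]
    simp [integral_cos, div_eq_inv_mul]
  have hsub : (∫ θ in (0:ℝ)..π, (Real.cos ((i:ℝ)*θ) - Real.cos (((i:ℝ)+2)*θ))/2)
      = ((∫ θ in (0:ℝ)..π, Real.cos ((i:ℝ)*θ)) - ∫ θ in (0:ℝ)..π, Real.cos (((i:ℝ)+2)*θ))/2 := by
    rw [intervalIntegral.integral_div, intervalIntegral.integral_sub]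
    · exact (Real.continuous_cos.comp (continuous_const.mul continuous_id)).intervalIntegrable _ _
    · exact (Real.continuous_cos.comp (continuous_const.mul continuous_id)).intervalIntegrable _ _
  rw [hsub]
  have hi2 : (∫ θ in (0:ℝ)..π, Real.cos (((i:ℝ)+2)*θ)) = 0 := by
    rw [hInt ((i:ℝ)+2) (by positivity)]
    rw [show ((i:ℝ)+2)*π = ((i+2:ℕ):ℝ)*π by push_cast; ring, Real.sin_nat_mul_pi]
    simp
  rw [hi2]
  by_cases h0 : i = 0
  · subst h0
    norm_num
  · have : (∫ θ in (0:ℝ)..π, Real.cos ((i:ℝ)*θ)) = 0 := by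
      rw [hInt (i:ℝ) (Nat.cast_ne_zero.mpr h0)]
      rw [show ((i:ℝ))*π = ((i:ℕ):ℝ)*π by push_cast; ring, Real.sin_nat_mul_pi]
      simp
    rw [this]
    simp [h0]

noncomputable def Phi (r s : ℝ) : ℝ :=
  Real.sqrt (1 - s^2) - r * Real.arcsin s
    + Real.sqrt (1 - r^2) * (Real.log (s - r)
        - Real.log (1 - r*s + Real.sqrt (1-r^2) * Real.sqrt (1 - s^2)))

lemma hD_pos {r : ℝ} (hr1 : -1 < r) (hr2 : r < 1) {s : ℝ} (hs : -1 ≤ s) (hs2 : s ≤ 1) :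
    0 < 1 - r*s + Real.sqrt (1-r^2) * Real.sqrt (1 - s^2) := by
  have h1 : r*s < 1 := by nlinarith [mul_self_nonneg (r-s), mul_self_nonneg (r+s), mul_pos (by linarith : (0:ℝ) < 1-r) (by linarith : (0:ℝ) < 1+r)]
  have h2 : 0 ≤ Real.sqrt (1-r^2) * Real.sqrt (1 - s^2) := by positivity
  linarith

lemma Phi_contOn {r : ℝ} (hr1 : -1 < r) (hr2 : r < 1) {S : Set ℝ} (hS : S ⊆ Icc (-1) 1)
    (hSr : ∀ s ∈ S, s ≠ r) : ContinuousOn (Phi r) S := by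
  unfold Phi
  apply ContinuousOn.add
  · exact ((sqrt1s_cont).continuousOn).sub
      ((continuous_const.mul Real.continuous_arcsin).continuousOn)
  apply ContinuousOn.mul continuousOn_const
  apply ContinuousOn.sub
  · apply ContinuousOn.log
    · exact (continuous_id.sub continuous_const).continuousOn
    · intro s hs; exact sub_ne_zero.mpr (hSr s hs)
  · apply ContinuousOn.log
    · exact (((continuous_const.sub (continuous_const.mul continuous_id)).add
        (continuous_const.mul sqrt1s_cont))).continuousOn
    · intro s hs; exact (hD_pos hr1 hr2 (hS hs).1 (hS hs).2).ne'

lemma Phi_deriv {r : ℝ} (hr1 : -1 < r) (hr2 : r < 1) {s : ℝ} (hs1 : -1 < s) (hs2 : s < 1)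
    (hsr : s ≠ r) :
    HasDerivAt (Phi r) (Real.sqrt (1 - s^2)/(s - r)) s := by
  set W := Real.sqrt (1 - s^2) with hWdef
  set d := Real.sqrt (1 - r^2) with hddef
  have hs2pos : (0:ℝ) < 1 - s^2 := by nlinarith
  have hr2pos : (0:ℝ) < 1 - r^2 := by nlinarith
  have hWpos : 0 < W := Real.sqrt_pos.mpr hs2pos
  have hdpos : 0 < d := Real.sqrt_pos.mpr hr2pos
  have hW2 : W^2 = 1 - s^2 := Real.sq_sqrt hs2pos.le
  have hd2 : d^2 = 1 - r^2 := Real.sq_sqrt hr2pos.le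
  have hDpos : 0 < 1 - r*s + d*W := hD_pos hr1 hr2 hs1.le hs2.le
  have hsrne : s - r ≠ 0 := sub_ne_zero.mpr hsr
  -- derivative of sqrt(1 - s^2)
  have hinner : HasDerivAt (fun x : ℝ => 1 - x^2) (-(2*s)) s := by
    simpa using ((hasDerivAt_pow 2 s).const_sub 1)
  have h1 : HasDerivAt (fun x : ℝ => Real.sqrt (1 - x^2)) (-s/W) s := by
    have : HasDerivAt (fun x : ℝ => Real.sqrt (1 - x^2)) _ s :=
      (Real.hasDerivAt_sqrt hs2pos.ne').comp s hinner
    convert this using 1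
    rw [← hWdef]
    field_simp [hWpos.ne']
  have h2 : HasDerivAt (fun x : ℝ => r * Real.arcsin x) (r * (1/W)) s :=
    (Real.hasDerivAt_arcsin (by linarith) (by linarith)).const_mul r
  have h3 : HasDerivAt (fun x : ℝ => Real.log (x - r)) (1/(s-r)) s := by
    have := (Real.hasDerivAt_log hsrne).comp s ((hasDerivAt_id s).sub_const r)
    simpa [one_div, Function.comp_def] using this
  have hDin : HasDerivAt (fun x : ℝ => 1 - r*x + d*Real.sqrt (1 - x^2)) (-r + d*(-s/W)) s := by
    have ha : HasDerivAt (fun x : ℝ => 1 - r*x) (-r) s := by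
      simpa using ((hasDerivAt_id s).const_mul r).const_sub 1
    exact ha.add ((h1.const_mul d))
  have h4 : HasDerivAt (fun x : ℝ => Real.log (1 - r*x + d*Real.sqrt (1 - x^2)))
      ((-r + d*(-s/W))/(1 - r*s + d*W)) s := by
    have := (Real.hasDerivAt_log hDpos.ne').comp s hDin
    simpa [div_eq_inv_mul, mul_comm, Function.comp_def] using this
  have htot : HasDerivAt (Phi r)
      (-s/W - r * (1/W) + d * (1/(s-r) - (-r + d*(-s/W))/(1 - r*s + d*W))) s := by
    unfold Phi
    rw [← hddef]
    exact ((h1.sub h2).add ((h3.sub h4).const_mul d))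
  convert htot using 1
  rw [div_sub_div _ _ hsrne hDpos.ne']
  field_simp [(show 0 < 1 - s*r + W*d by linarith).ne']
  linear_combination (1 - s*r + W*d - d^2) * hW2 + (-(1 - s*r + W*d) + d*W) * hd2

lemma intervalIntegrable_kernel {r a b : ℝ} (h : ∀ s ∈ uIcc a b, s ≠ r) :
    IntervalIntegrable (fun s => Real.sqrt (1-s^2)/(s-r)) volume a b :=
  ContinuousOn.intervalIntegrable <|
    (sqrt1s_cont.continuousOn).div ((continuous_id.sub continuous_const).continuousOn)
      (fun s hs => sub_ne_zero.mpr (h s hs))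

lemma Phi_one {r : ℝ} : Phi r 1 = -(r*(π/2)) := by
  unfold Phi
  rw [show (1:ℝ) - 1^2 = 0 by norm_num, Real.sqrt_zero, Real.arcsin_one, mul_zero, add_zero,
    mul_one]
  ring

lemma Phi_neg_one {r : ℝ} : Phi r (-1) = r*(π/2) := by
  unfold Phi
  rw [show (1:ℝ) - (-1)^2 = 0 by norm_num, Real.sqrt_zero, Real.arcsin_neg, Real.arcsin_one,
    mul_zero, add_zero, show (-1:ℝ) - r = -(1+r) by ring, Real.log_neg_eq_log,
    show (1:ℝ) - r*(-1) = 1+r by ring]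
  ring

lemma kernel_tendsto {r : ℝ} (hr1 : -1 < r) (hr2 : r < 1) :
    Tendsto (fun ε : ℝ => (∫ s in (-1:ℝ)..(r-ε), Real.sqrt (1-s^2)/(s-r))
        + ∫ s in (r+ε)..(1:ℝ), Real.sqrt (1-s^2)/(s-r))
      (nhdsWithin 0 (Ioi 0)) (nhds (-(π*r))) := by
  set d := Real.sqrt (1-r^2) with hd
  set Q : ℝ → ℝ := fun ε =>
    ((Real.sqrt (1-(r-ε)^2) - r*Real.arcsin (r-ε)
        - d*Real.log (1-r*(r-ε)+d*Real.sqrt (1-(r-ε)^2)))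
      - (Real.sqrt (1-(r+ε)^2) - r*Real.arcsin (r+ε)
        - d*Real.log (1-r*(r+ε)+d*Real.sqrt (1-(r+ε)^2)))) - Phi r (-1) + Phi r 1 with hQ
  have hPhiQ : ∀ ε : ℝ, (Phi r (r-ε) - Phi r (-1)) + (Phi r 1 - Phi r (r+ε)) = Q ε := by
    intro ε
    rw [hQ]
    simp only [Phi]
    rw [show r - ε - r = -ε by ring, Real.log_neg_eq_log, show r + ε - r = ε by ring]
    ring
  have hr2pos : (0:ℝ) < 1 - r^2 := by nlinarith
  have hdpos : 0 < d := Real.sqrt_pos.mpr hr2pos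
  have hd2 : d^2 = 1 - r^2 := Real.sq_sqrt hr2pos.le
  have hQcont : ContinuousAt Q 0 := by
    have hcs : Continuous (fun ε : ℝ => Real.sqrt (1-(r-ε)^2)) :=
      sqrt1s_cont.comp (continuous_const.sub continuous_id)
    have hcs' : Continuous (fun ε : ℝ => Real.sqrt (1-(r+ε)^2)) :=
      sqrt1s_cont.comp (continuous_const.add continuous_id)
    have hD0 : (0:ℝ) < 1-r*r+d*Real.sqrt (1-r^2) := by
      rw [← hd]
      nlinarith [hdpos]
    have hL1 : ContinuousAt (fun ε : ℝ => Real.log (1-r*(r-ε)+d*Real.sqrt (1-(r-ε)^2))) 0 := by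
      apply ContinuousAt.log
      · exact ((continuous_const.sub (continuous_const.mul
          (continuous_const.sub continuous_id))).add (continuous_const.mul hcs)).continuousAt
      · simpa using hD0.ne'
    have hL2 : ContinuousAt (fun ε : ℝ => Real.log (1-r*(r+ε)+d*Real.sqrt (1-(r+ε)^2))) 0 := by
      apply ContinuousAt.log
      · exact ((continuous_const.sub (continuous_const.mul
          (continuous_const.add continuous_id))).add (continuous_const.mul hcs')).continuousAt
      · simpa using hD0.ne'
    rw [hQ]
    apply ContinuousAt.add
    apply ContinuousAt.sub
    apply ContinuousAt.sub
    · exact (hcs.continuousAt.sub ((continuous_const.mul (Real.continuous_arcsin.comp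
        (continuous_const.sub continuous_id))).continuousAt)).sub (hL1.const_mul d)
    · exact (hcs'.continuousAt.sub ((continuous_const.mul (Real.continuous_arcsin.comp
        (continuous_const.add continuous_id))).continuousAt)).sub (hL2.const_mul d)
    · exact continuousAt_const
    · exact continuousAt_const
  have hQ0 : Q 0 = -(π*r) := by
    rw [hQ]
    simp only [sub_zero, add_zero]
    rw [Phi_one, Phi_neg_one]
    ring
  have hPsi : Tendsto Q (nhdsWithin 0 (Ioi 0)) (nhds (-(π*r))) := by
    rw [← hQ0]
    exact hQcont.continuousWithinAt.tendsto
  apply hPsi.congr'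
  have hδ : (0:ℝ) < min (1+r) (1-r) := lt_min (by linarith) (by linarith)
  filter_upwards [Ioo_mem_nhdsGT_of_mem (Set.mem_Ico.mpr ⟨le_refl 0, hδ⟩)] with ε hε
  obtain ⟨hε0, hεδ⟩ := hε
  have hε1 : ε < 1 + r := lt_of_lt_of_le hεδ (min_le_left _ _)
  have hε2 : ε < 1 - r := lt_of_lt_of_le hεδ (min_le_right _ _)
  have hI1 : (∫ s in (-1:ℝ)..(r-ε), Real.sqrt (1-s^2)/(s-r)) = Phi r (r-ε) - Phi r (-1) := by
    apply intervalIntegral.integral_eq_sub_of_hasDeriv_right_of_le (by linarith)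
    · apply Phi_contOn hr1 hr2 (fun s hs => ⟨hs.1, by linarith [hs.2]⟩)
      intro s hs
      have := hs.2
      intro h; rw [h] at this; linarith
    · intro x hx
      exact (Phi_deriv hr1 hr2 hx.1 (by linarith [hx.2]) (by linarith [hx.2])).hasDerivWithinAt
    · apply intervalIntegrable_kernel
      intro s hs
      rw [Set.uIcc_of_le (by linarith : (-1:ℝ) ≤ r-ε)] at hs
      intro h; rw [h] at hs; linarith [hs.2]
  have hI2 : (∫ s in (r+ε)..(1:ℝ), Real.sqrt (1-s^2)/(s-r)) = Phi r 1 - Phi r (r+ε) := by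
    apply intervalIntegral.integral_eq_sub_of_hasDeriv_right_of_le (by linarith)
    · apply Phi_contOn hr1 hr2 (fun s hs => ⟨by linarith [hs.1], hs.2⟩)
      intro s hs
      have := hs.1
      intro h; rw [h] at this; linarith
    · intro x hx
      exact (Phi_deriv hr1 hr2 (by linarith [hx.1]) hx.2 (by linarith [hx.1])).hasDerivWithinAt
    · apply intervalIntegrable_kernel
      intro s hs
      rw [Set.uIcc_of_le (by linarith : r+ε ≤ (1:ℝ))] at hs
      intro h; rw [h] at hs; linarith [hs.1]
  rw [← hPhiQ ε, hI1, hI2]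

lemma T_eval_eq (k : ℕ) (r : ℝ) :
    (Polynomial.Chebyshev.T ℝ ((k:ℤ)+1)).eval r = r * evU k r - evU ((k:ℤ)-1) r := by
  have h := Polynomial.Chebyshev.T_eq_U_sub_X_mul_U ℝ ((k:ℤ)+1)
  have h1 : (Polynomial.Chebyshev.T ℝ ((k:ℤ)+1)).eval r
      = evU ((k:ℤ)+1) r - r * evU k r := by
    rw [h]
    simp [evU]
  have h2 := evU_add_two ((k:ℤ)-1) r
  rw [show (k:ℤ)-1+2 = (k:ℤ)+1 by ring, show (k:ℤ)-1+1 = (k:ℤ) by ring] at h2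
  rw [h1, h2]
  ring

lemma cpvU {r : ℝ} (hr1 : -1 < r) (hr2 : r < 1) (k : ℕ) :
    Tendsto (fun ε : ℝ => (∫ s in (-1:ℝ)..(r-ε), evU k s * Real.sqrt (1-s^2)/(s-r))
        + ∫ s in (r+ε)..(1:ℝ), evU k s * Real.sqrt (1-s^2)/(s-r))
      (nhdsWithin 0 (Ioi 0))
      (nhds (-(π * (Polynomial.Chebyshev.T ℝ ((k:ℤ)+1)).eval r))) := by
  set Rf : ℝ → ℝ := fun s => ∑ i ∈ range k, 2 * evU ((k:ℤ)-1-i) r * evU i s with hRf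
  have hRfc : Continuous Rf := by
    rw [hRf]
    exact continuous_finset_sum _ (fun i _ => continuous_const.mul (evU_cont i))
  set g : ℝ → ℝ := fun s => Rf s * Real.sqrt (1-s^2) with hg
  have hgc : Continuous g := hRfc.mul sqrt1s_cont
  have hpt : ∀ s : ℝ, s ≠ r →
      evU k s * Real.sqrt (1-s^2)/(s-r) = g s + evU k r * (Real.sqrt (1-s^2)/(s-r)) := by
    intro s hs
    have hd := ddiff k r s
    have hne : s - r ≠ 0 := sub_ne_zero.mpr hs
    have hd' : (s - r) * Rf s = evU k s - evU k r := hd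
    rw [hg]
    field_simp
    linear_combination (-Real.sqrt (1-s^2)) * hd'
  -- primitive of g
  set H : ℝ → ℝ := fun x => ∫ s in (-1:ℝ)..x, g s with hH
  have hHc : Continuous H :=
    intervalIntegral.continuous_primitive (fun a b => hgc.intervalIntegrable a b) (-1)
  have hH1 : H 1 = π * evU ((k:ℤ)-1) r := by
    simp only [hH]
    have h1 : (∫ s in (-1:ℝ)..1, g s)
        = ∑ i ∈ range k, ∫ s in (-1:ℝ)..1, 2 * evU ((k:ℤ)-1-i) r * (evU i s * Real.sqrt (1-s^2)) := by
      rw [← intervalIntegral.integral_finset_sum]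
      · apply intervalIntegral.integral_congr
        intro s _
        simp only [hg, hRf, Finset.sum_mul]
        exact Finset.sum_congr rfl (fun i _ => by ring)
      · intro i _
        exact (continuous_const.mul ((evU_cont i).mul sqrt1s_cont)).intervalIntegrable _ _
    rw [h1]
    have h2 : ∀ i ∈ range k,
        (∫ s in (-1:ℝ)..1, 2 * evU ((k:ℤ)-1-i) r * (evU i s * Real.sqrt (1-s^2)))
          = 2 * evU ((k:ℤ)-1-i) r * (if i = 0 then π/2 else 0) := by
      intro i _
      rw [intervalIntegral.integral_const_mul, moment i]
    rw [Finset.sum_congr rfl h2]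
    rcases Nat.eq_zero_or_pos k with hk | hk
    · subst hk
      simp [evU_neg_one]
    · rw [Finset.sum_eq_single_of_mem 0 (Finset.mem_range.mpr hk)]
      · norm_num
        ring
      · intro b _ hb
        simp [hb]
  have hsplit : ∀ᶠ ε in nhdsWithin (0:ℝ) (Ioi 0),
      ((∫ s in (-1:ℝ)..(r-ε), evU k s * Real.sqrt (1-s^2)/(s-r))
        + ∫ s in (r+ε)..(1:ℝ), evU k s * Real.sqrt (1-s^2)/(s-r))
      = (H (r-ε) + (H 1 - H (r+ε)))
        + evU k r * ((∫ s in (-1:ℝ)..(r-ε), Real.sqrt (1-s^2)/(s-r))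
            + ∫ s in (r+ε)..(1:ℝ), Real.sqrt (1-s^2)/(s-r)) := by
    filter_upwards [self_mem_nhdsWithin] with ε (hε : 0 < ε)
    have hne1 : ∀ s ∈ Set.uIcc (-1:ℝ) (r-ε), s ≠ r := by
      intro s hs
      rcases le_or_gt (-1:ℝ) (r-ε) with h | h
      · rw [Set.uIcc_of_le h] at hs
        intro hh; rw [hh] at hs; linarith [hs.2]
      · rw [Set.uIcc_of_ge h.le] at hs
        intro hh; rw [hh] at hs; linarith [hs.2]
    have hne2 : ∀ s ∈ Set.uIcc (r+ε) (1:ℝ), s ≠ r := by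
      intro s hs
      rcases le_or_gt (r+ε) (1:ℝ) with h | h
      · rw [Set.uIcc_of_le h] at hs
        intro hh; rw [hh] at hs; linarith [hs.1]
      · rw [Set.uIcc_of_ge h.le] at hs
        intro hh; rw [hh] at hs; linarith [hs.1]
    have e1 : (∫ s in (-1:ℝ)..(r-ε), evU k s * Real.sqrt (1-s^2)/(s-r))
        = H (r-ε) + evU k r * ∫ s in (-1:ℝ)..(r-ε), Real.sqrt (1-s^2)/(s-r) := by
      rw [hH, ← intervalIntegral.integral_const_mul, ← intervalIntegral.integral_add
        (hgc.intervalIntegrable _ _)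
        ((intervalIntegrable_kernel hne1).const_mul _)]
      apply intervalIntegral.integral_congr
      intro s hs
      exact hpt s (hne1 s hs)
    have e2 : (∫ s in (r+ε)..(1:ℝ), evU k s * Real.sqrt (1-s^2)/(s-r))
        = (H 1 - H (r+ε)) + evU k r * ∫ s in (r+ε)..(1:ℝ), Real.sqrt (1-s^2)/(s-r) := by
      have hHsub : H 1 - H (r+ε) = ∫ s in (r+ε)..(1:ℝ), g s := by
        rw [hH]
        exact intervalIntegral.integral_interval_sub_left
          (hgc.intervalIntegrable _ _) (hgc.intervalIntegrable _ _)
      rw [hHsub, ← intervalIntegral.integral_const_mul, ← intervalIntegral.integral_add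
        (hgc.intervalIntegrable _ _)
        ((intervalIntegrable_kernel hne2).const_mul _)]
      apply intervalIntegral.integral_congr
      intro s hs
      exact hpt s (hne2 s hs)
    rw [e1, e2]
    ring
  apply Filter.Tendsto.congr' (hsplit.mono fun ε h => h.symm)
  have hlim1 : Tendsto (fun ε : ℝ => H (r-ε) + (H 1 - H (r+ε))) (nhdsWithin 0 (Ioi 0))
      (nhds (H 1)) := by
    have t1 : Tendsto (fun ε : ℝ => H (r-ε)) (nhds 0) (nhds (H r)) := by
      have : Continuous (fun ε : ℝ => H (r-ε)) := hHc.comp (continuous_const.sub continuous_id)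
      simpa using this.tendsto 0
    have t2 : Tendsto (fun ε : ℝ => H (r+ε)) (nhds 0) (nhds (H r)) := by
      have : Continuous (fun ε : ℝ => H (r+ε)) := hHc.comp (continuous_const.add continuous_id)
      simpa using this.tendsto 0
    have h0 := (t1.add ((tendsto_const_nhds (x := H 1)).sub t2)).mono_left
      (nhdsWithin_le_nhds (s := Ioi (0:ℝ)))
    convert h0 using 2
    ring
  have hlim2 : Tendsto (fun ε : ℝ => evU k r * ((∫ s in (-1:ℝ)..(r-ε), Real.sqrt (1-s^2)/(s-r))
      + ∫ s in (r+ε)..(1:ℝ), Real.sqrt (1-s^2)/(s-r))) (nhdsWithin 0 (Ioi 0))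
      (nhds (evU k r * (-(π*r)))) :=
    (kernel_tendsto hr1 hr2).const_mul _
  have := hlim1.add hlim2
  convert this using 2
  rw [hH1, T_eval_eq]
  ring

/-- For integers `m ≥ 2`, `n ≥ 2m - 2` and `r ∈ (-1, 1)`, the Cauchy
principal value integral `⨍_{-1}^{1} U_n(s) (1-s²)^{m-1/2}/(s-r) ds` exists and equals
`π (-1)^m (1/2)^{2m-2} Σ_{j=0}^{2m-2} (-1)^j C(2m-2, j) T_{n+3-2m+2j}(r)`. -/
theorem cpv_U_general (m n : ℕ) (hm : 2 ≤ m) (hn : 2 * m - 2 ≤ n) (r : ℝ)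
    (hr : r ∈ Set.Ioo (-1 : ℝ) 1) :
    Filter.Tendsto
      (fun ε : ℝ =>
        (∫ s in (-1 : ℝ)..(r - ε),
            (Polynomial.Chebyshev.U ℝ n).eval s * (1 - s ^ 2) ^ ((m : ℝ) - 1 / 2) / (s - r)) +
        ∫ s in (r + ε)..(1 : ℝ),
            (Polynomial.Chebyshev.U ℝ n).eval s * (1 - s ^ 2) ^ ((m : ℝ) - 1 / 2) / (s - r))
      (nhdsWithin 0 (Set.Ioi 0))
      (nhds (Real.pi * (-1 : ℝ) ^ m * (1 / 2 : ℝ) ^ (2 * m - 2) *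
        ∑ j ∈ Finset.range (2 * m - 1), (-1 : ℝ) ^ j * (Nat.choose (2 * m - 2) j : ℝ) *
          (Polynomial.Chebyshev.T ℝ ((n : ℤ) + 3 - 2 * m + 2 * j)).eval r)) := by
  obtain ⟨hr1, hr2⟩ := hr
  set p := m - 1 with hp
  have hm1 : m = p + 1 := by omega
  have h2m2 : 2*m - 2 = 2*p := by omega
  have h2m1 : 2*m - 1 = 2*p + 1 := by omega
  set kj : ℕ → ℕ := fun j => n + 2*j + 2 - 2*m with hkj
  have hkjz : ∀ j : ℕ, ((kj j : ℕ) : ℤ) = (n:ℤ) + 2*j + 2 - 2*m := by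
    intro j
    have hge : 2*m ≤ n + 2*j + 2 := by omega
    rw [hkj]
    push_cast [Nat.cast_sub hge]
    ring
  set c : ℕ → ℝ := fun j => (-1:ℝ)^p * (4⁻¹:ℝ)^p * ((-1:ℝ)^j * ((2*p).choose j : ℝ)) with hc
  -- master pointwise identity
  have hmaster : ∀ s : ℝ, -1 ≤ s → s ≤ 1 →
      evU n s * (1 - s^2) ^ ((m:ℝ) - 1/2)
        = ∑ j ∈ range (2*p+1), c j * (evU (kj j) s * Real.sqrt (1-s^2)) := by
    intro s hs1 hs2
    have h0 : (0:ℝ) ≤ 1 - s^2 := by nlinarith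
    have hsplit : (1 - s^2) ^ ((m:ℝ) - 1/2) = (1-s^2)^p * Real.sqrt (1-s^2) := by
      rcases eq_or_lt_of_le h0 with heq | hpos
      · rw [← heq, Real.sqrt_zero, mul_zero]
        apply Real.zero_rpow
        have h2 : (2:ℝ) ≤ (m:ℝ) := by exact_mod_cast hm
        intro hcon; rw [sub_eq_zero] at hcon; norm_num at hcon; linarith
      · have hcast : ((p:ℕ):ℝ) = (m:ℝ) - 1 := by
          rw [hp, Nat.cast_sub (by omega : 1 ≤ m)]; norm_num
        rw [show (m:ℝ) - 1/2 = ((p:ℕ):ℝ) + 1/2 by rw [hcast]; ring,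
          Real.rpow_add hpos, Real.rpow_natCast, Real.sqrt_eq_rpow]
    rw [hsplit]
    have hE := lemE p ((n:ℤ) - 2*p) s
    rw [show (n:ℤ) - 2*p + 2*p = (n:ℤ) by ring] at hE
    calc evU n s * ((1-s^2)^p * Real.sqrt (1-s^2))
        = ((-1:ℝ)^p * ((s^2-1)^p * evU n s)) * Real.sqrt (1-s^2) := by
          rw [show (1:ℝ)-s^2 = -(s^2-1) by ring, neg_pow]
          ring
      _ = ((-1:ℝ)^p * ((4:ℝ)⁻¹^p * ∑ j ∈ range (2*p+1),
            (-1:ℝ)^j * ((2*p).choose j : ℝ) * evU ((n:ℤ) - 2*p + 2*j) s)) * Real.sqrt (1-s^2) := by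
          rw [hE]
      _ = ∑ j ∈ range (2*p+1), c j * (evU ((n:ℤ) - 2*p + 2*j) s * Real.sqrt (1-s^2)) := by
          rw [Finset.mul_sum, Finset.mul_sum, Finset.sum_mul]
          exact Finset.sum_congr rfl (fun j _ => by rw [hc]; ring)
      _ = ∑ j ∈ range (2*p+1), c j * (evU (kj j) s * Real.sqrt (1-s^2)) := by
          apply Finset.sum_congr rfl
          intro j _
          rw [hkjz j, show (n:ℤ) + 2*j + 2 - 2*m = (n:ℤ) - 2*p + 2*j by
            rw [show (m:ℕ) = p+1 from hm1]; push_cast; ring]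
  -- per-j tendsto
  have hjt : Tendsto (fun ε : ℝ => ∑ j ∈ range (2*p+1), c j *
      ((∫ s in (-1:ℝ)..(r-ε), evU (kj j) s * Real.sqrt (1-s^2)/(s-r))
        + ∫ s in (r+ε)..(1:ℝ), evU (kj j) s * Real.sqrt (1-s^2)/(s-r)))
      (nhdsWithin 0 (Ioi 0))
      (nhds (∑ j ∈ range (2*p+1), c j *
        (-(π * (Polynomial.Chebyshev.T ℝ ((kj j:ℤ)+1)).eval r)))) := by
    apply tendsto_finset_sum
    intro j _
    exact (cpvU hr1 hr2 (kj j)).const_mul (c j)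
  -- value equality
  have hval : (∑ j ∈ range (2*p+1), c j *
      (-(π * (Polynomial.Chebyshev.T ℝ ((kj j:ℤ)+1)).eval r)))
      = Real.pi * (-1 : ℝ) ^ m * (1 / 2 : ℝ) ^ (2 * m - 2) *
        ∑ j ∈ Finset.range (2 * m - 1), (-1 : ℝ) ^ j * (Nat.choose (2 * m - 2) j : ℝ) *
          (Polynomial.Chebyshev.T ℝ ((n : ℤ) + 3 - 2 * m + 2 * j)).eval r := by
    rw [h2m1, h2m2, Finset.mul_sum]
    apply Finset.sum_congr rfl
    intro j _
    simp only [hc]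
    rw [hkjz j, show (n:ℤ) + 2*j + 2 - 2*m + 1 = (n:ℤ) + 3 - 2*m + 2*j by ring,
      show (m:ℕ) = p+1 from hm1, pow_succ, pow_mul]
    norm_num
    ring
  rw [← hval]
  apply hjt.congr'
  have hδ : (0:ℝ) < min (1+r) (1-r) := lt_min (by linarith) (by linarith)
  filter_upwards [Ioo_mem_nhdsGT_of_mem (Set.mem_Ico.mpr ⟨le_refl 0, hδ⟩)] with ε hε
  obtain ⟨hε0, hεδ⟩ := hε
  have hε1 : ε < 1 + r := lt_of_lt_of_le hεδ (min_le_left _ _)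
  have hε2 : ε < 1 - r := lt_of_lt_of_le hεδ (min_le_right _ _)
  have hInt1 : ∀ j : ℕ, IntervalIntegrable
      (fun s => c j * (evU (kj j) s * Real.sqrt (1-s^2)/(s-r))) volume (-1) (r-ε) := by
    intro j
    apply ContinuousOn.intervalIntegrable
    apply ContinuousOn.mul continuousOn_const
    apply ContinuousOn.div (((evU_cont _).mul sqrt1s_cont).continuousOn)
      ((continuous_sub_right r).continuousOn)
    intro s hs
    rw [Set.uIcc_of_le (by linarith : (-1:ℝ) ≤ r-ε)] at hs
    have : s ≤ r - ε := hs.2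
    intro hcon; rw [sub_eq_zero] at hcon; rw [hcon] at this; linarith
  have hInt2 : ∀ j : ℕ, IntervalIntegrable
      (fun s => c j * (evU (kj j) s * Real.sqrt (1-s^2)/(s-r))) volume (r+ε) 1 := by
    intro j
    apply ContinuousOn.intervalIntegrable
    apply ContinuousOn.mul continuousOn_const
    apply ContinuousOn.div (((evU_cont _).mul sqrt1s_cont).continuousOn)
      ((continuous_sub_right r).continuousOn)
    intro s hs
    rw [Set.uIcc_of_le (by linarith : r+ε ≤ (1:ℝ))] at hs
    have : r + ε ≤ s := hs.1
    intro hcon; rw [sub_eq_zero] at hcon; rw [hcon] at this; linarith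
  have hptid : ∀ s : ℝ, -1 ≤ s → s ≤ 1 →
      (Polynomial.Chebyshev.U ℝ n).eval s * (1 - s ^ 2) ^ ((m : ℝ) - 1 / 2) / (s - r)
        = ∑ j ∈ range (2*p+1), c j * (evU (kj j) s * Real.sqrt (1-s^2)/(s-r)) := by
    intro s hs1 hs2
    have : (Polynomial.Chebyshev.U ℝ n).eval s * (1 - s ^ 2) ^ ((m : ℝ) - 1 / 2)
        = evU n s * (1 - s^2) ^ ((m:ℝ) - 1/2) := rfl
    rw [this, hmaster s hs1 hs2, Finset.sum_div]
    exact Finset.sum_congr rfl (fun j _ => by rw [mul_div_assoc, mul_div_assoc])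
  have hi1 : (∫ s in (-1:ℝ)..(r-ε),
      (Polynomial.Chebyshev.U ℝ n).eval s * (1 - s ^ 2) ^ ((m : ℝ) - 1 / 2) / (s - r))
      = ∑ j ∈ range (2*p+1),
          ∫ s in (-1:ℝ)..(r-ε), c j * (evU (kj j) s * Real.sqrt (1-s^2)/(s-r)) := by
    rw [← intervalIntegral.integral_finset_sum (fun j _ => hInt1 j)]
    apply intervalIntegral.integral_congr
    intro s hs
    rw [Set.uIcc_of_le (by linarith : (-1:ℝ) ≤ r-ε)] at hs
    exact hptid s hs.1 (by linarith [hs.2])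
  have hi2 : (∫ s in (r+ε)..(1:ℝ),
      (Polynomial.Chebyshev.U ℝ n).eval s * (1 - s ^ 2) ^ ((m : ℝ) - 1 / 2) / (s - r))
      = ∑ j ∈ range (2*p+1),
          ∫ s in (r+ε)..(1:ℝ), c j * (evU (kj j) s * Real.sqrt (1-s^2)/(s-r)) := by
    rw [← intervalIntegral.integral_finset_sum (fun j _ => hInt2 j)]
    apply intervalIntegral.integral_congr
    intro s hs
    rw [Set.uIcc_of_le (by linarith : r+ε ≤ (1:ℝ))] at hs
    exact hptid s (by linarith [hs.1]) hs.2
  rw [hi1, hi2, ← Finset.sum_add_distrib]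
  apply Finset.sum_congr rfl
  intro j _
  rw [intervalIntegral.integral_const_mul, intervalIntegral.integral_const_mul]
  ring
end

section
/- Let n ≥ 2 be an integer and define F : (−1, 1) → ℝ by F(r) = ⨍_{−1}^{1} T_n(s)·√(1−s²)/(s−r) ds (Cauchy principal value). Then F is differentiable at every r ∈ (−1, 1) and F′(r) = (π/2)·[ (n−1)·U_{n−2}(r) − (n+1)·U_n(r) ]. (F′(r) is the Hadamard finite-part integral ⨎_{−1}^{1} T_n(s)·√(1−s²)/(s−r)² ds.) -/
set_option maxHeartbeats 1600000

open Polynomial Polynomial.Chebyshev Real MeasureTheory intervalIntegral Filter Set Topology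

lemma sqrtW_hasDeriv {s : ℝ} (h1 : -1 < s) (h2 : s < 1) :
    HasDerivAt (fun x : ℝ => Real.sqrt (1 - x ^ 2)) (-s / Real.sqrt (1 - s ^ 2)) s := by
  have hpos : 0 < 1 - s ^ 2 := by nlinarith
  have hin : HasDerivAt (fun x : ℝ => 1 - x ^ 2) (-(2 * s)) s := by
    simpa using ((hasDerivAt_pow 2 s).const_sub 1)
  have h := (Real.hasDerivAt_sqrt (ne_of_gt hpos)).comp s hin
  convert h using 1 <;> try rfl
  have : Real.sqrt (1 - s ^ 2) ≠ 0 := by positivity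
  field_simp

lemma WU_hasDeriv (k : ℤ) {s : ℝ} (h1 : -1 < s) (h2 : s < 1) :
    HasDerivAt (fun x : ℝ => Real.sqrt (1 - x ^ 2) * (U ℝ k).eval x)
      (-((k : ℝ) + 1) * (T ℝ (k + 1)).eval s / Real.sqrt (1 - s ^ 2)) s := by
  have hpos : 0 < 1 - s ^ 2 := by nlinarith
  have hW : Real.sqrt (1 - s ^ 2) ≠ 0 := by positivity
  have hW2 : Real.sqrt (1 - s ^ 2) ^ 2 = 1 - s ^ 2 := Real.sq_sqrt hpos.le
  have h := (sqrtW_hasDeriv h1 h2).mul (Polynomial.hasDerivAt (U ℝ k) s)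
  convert h using 1 <;> try rfl
  have hid := congr_arg (Polynomial.eval s) (add_one_mul_T_eq_poly_in_U (R := ℝ) k)
  simp only [eval_mul, eval_add, eval_sub, eval_one, eval_X, eval_pow, eval_intCast] at hid
  field_simp
  linear_combination -hid - eval s (derivative (U ℝ k)) * hW2

lemma WU_hasDeriv' (k : ℤ) {s : ℝ} (h1 : -1 < s) (h2 : s < 1) :
    HasDerivAt (fun x : ℝ => Real.sqrt (1 - x ^ 2) * (U ℝ (k - 1)).eval x)
      (-(k : ℝ) * (T ℝ k).eval s / Real.sqrt (1 - s ^ 2)) s := by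
  have := WU_hasDeriv (k - 1) h1 h2
  simp only [sub_add_cancel] at this
  convert this using 2
  push_cast; ring

lemma sqrt_one_sub_one : Real.sqrt (1 - (1:ℝ) ^ 2) = 0 := by norm_num
lemma sqrt_one_sub_neg_one : Real.sqrt (1 - (-1:ℝ) ^ 2) = 0 := by norm_num

lemma integral_TW_of_ne (m : ℤ) (hm0 : m ≠ 0) (hm2 : m ≠ 2) (hm2' : m ≠ -2) :
    ∫ s in (-1:ℝ)..1, (T ℝ m).eval s * Real.sqrt (1 - s ^ 2) = 0 := by
  set P : ℝ := (m:ℝ) * ((m:ℝ) + 2) * ((m:ℝ) - 2) with hP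
  set K : ℝ := -4 * P with hK
  set f : ℝ → ℝ := fun s =>
    2*((m:ℝ)+2)*((m:ℝ)-2) * (Real.sqrt (1 - s ^ 2) * (U ℝ (m - 1)).eval s)
    - (m:ℝ)*((m:ℝ)-2) * (Real.sqrt (1 - s ^ 2) * (U ℝ (m + 1)).eval s)
    - (m:ℝ)*((m:ℝ)+2) * (Real.sqrt (1 - s ^ 2) * (U ℝ (m - 3)).eval s) with hf
  have hderiv : ∀ s ∈ Ioo (-1:ℝ) 1,
      HasDerivAt f (K * ((T ℝ m).eval s * Real.sqrt (1 - s ^ 2))) s := by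
    intro s hs
    have h1 := hs.1; have h2 := hs.2
    have hpos : 0 < 1 - s ^ 2 := by nlinarith
    have hW : Real.sqrt (1 - s ^ 2) ≠ 0 := by positivity
    have hW2 : Real.sqrt (1 - s ^ 2) ^ 2 = 1 - s ^ 2 := Real.sq_sqrt hpos.le
    have d1 := (WU_hasDeriv' m h1 h2).const_mul (2*((m:ℝ)+2)*((m:ℝ)-2))
    have d2 := (WU_hasDeriv' (m + 2) h1 h2).const_mul ((m:ℝ)*((m:ℝ)-2))
    have d3 := (WU_hasDeriv' (m - 2) h1 h2).const_mul ((m:ℝ)*((m:ℝ)+2))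
    have e2 : m + 2 - 1 = m + 1 := by ring
    have e3 : m - 2 - 1 = m - 3 := by ring
    rw [e2] at d2; rw [e3] at d3
    have := (d1.sub d2).sub d3
    convert this using 1 <;> try rfl
    have hid := congr_arg (Polynomial.eval s) (T_mul_T ℝ m 2)
    simp only [eval_mul, eval_add, eval_ofNat, T_two, eval_sub, eval_one, eval_pow, eval_X] at hid
    push_cast
    rw [hK, hP]
    have hWW : Real.sqrt (1 - s ^ 2) = (1 - s ^ 2) / Real.sqrt (1 - s ^ 2) := by
      rw [eq_div_iff hW, ← sq]; exact hW2
    linear_combination (((m:ℝ) * ((m:ℝ)+2) * ((m:ℝ)-2)) / Real.sqrt (1 - s ^ 2)) * hid +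
      (-4 * ((m:ℝ) * ((m:ℝ)+2) * ((m:ℝ)-2)) * (T ℝ m).eval s) * hWW
  have hsq : Continuous fun s : ℝ => Real.sqrt (1 - s ^ 2) :=
    Real.continuous_sqrt.comp (continuous_const.sub (continuous_pow 2))
  have hcont : ContinuousOn f (Icc (-1:ℝ) 1) := by
    apply Continuous.continuousOn
    exact ((continuous_const.mul (hsq.mul (U ℝ (m-1)).continuous)).sub
      (continuous_const.mul (hsq.mul (U ℝ (m+1)).continuous))).sub
      (continuous_const.mul (hsq.mul (U ℝ (m-3)).continuous))
  have hintg : Continuous fun s : ℝ => K * ((T ℝ m).eval s * Real.sqrt (1 - s ^ 2)) :=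
    continuous_const.mul ((T ℝ m).continuous.mul hsq)
  have hFTC := integral_eq_sub_of_hasDeriv_right_of_le (by norm_num : (-1:ℝ) ≤ 1) hcont
    (fun x hx => (hderiv x hx).hasDerivWithinAt) (hintg.intervalIntegrable _ _)
  have hf1 : f 1 = 0 := by simp [hf, sqrt_one_sub_one]
  have hfm1 : f (-1) = 0 := by simp [hf, sqrt_one_sub_neg_one]
  rw [hf1, hfm1, sub_zero, intervalIntegral.integral_const_mul] at hFTC
  have hKne : K ≠ 0 := by
    rw [hK, hP]
    have h0 : (m:ℝ) ≠ 0 := Int.cast_ne_zero.mpr hm0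
    have hp2 : (m:ℝ) + 2 ≠ 0 := by
      intro h; apply hm2'; have : (m:ℝ) = ((-2 : ℤ) : ℝ) := by push_cast; linarith
      exact_mod_cast this
    have hp2' : (m:ℝ) - 2 ≠ 0 := by
      intro h; apply hm2; have : (m:ℝ) = ((2 : ℤ) : ℝ) := by push_cast; linarith
      exact_mod_cast this
    positivity
  exact (mul_eq_zero.mp hFTC).resolve_left hKne

lemma integral_T2W :
    ∫ s in (-1:ℝ)..1, (T ℝ 2).eval s * Real.sqrt (1 - s ^ 2) = -(π/4) := by
  set f : ℝ → ℝ := fun s =>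
    -(Real.sqrt (1 - s ^ 2) * (U ℝ 1).eval s)/4 + Real.arccos s/4
    + (Real.sqrt (1 - s ^ 2) * (U ℝ 3).eval s)/16 with hf
  have hderiv : ∀ s ∈ Ioo (-1:ℝ) 1,
      HasDerivAt f ((T ℝ 2).eval s * Real.sqrt (1 - s ^ 2)) s := by
    intro s hs
    have h1 := hs.1; have h2 := hs.2
    have hpos : 0 < 1 - s ^ 2 := by nlinarith
    have hW : Real.sqrt (1 - s ^ 2) ≠ 0 := by positivity
    have hW2 : Real.sqrt (1 - s ^ 2) ^ 2 = 1 - s ^ 2 := Real.sq_sqrt hpos.le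
    have hWW : Real.sqrt (1 - s ^ 2) = (1 - s ^ 2) / Real.sqrt (1 - s ^ 2) := by
      rw [eq_div_iff hW, ← sq]; exact hW2
    have d1 : HasDerivAt (fun x : ℝ => -(Real.sqrt (1 - x ^ 2) * (U ℝ 1).eval x)/4)
        (-(-(2:ℝ) * (T ℝ 2).eval s / Real.sqrt (1 - s ^ 2))/4) s := by
      have := ((WU_hasDeriv' 2 h1 h2).neg).div_const 4
      convert this using 2 <;> (try rfl) <;> norm_num
    have d2 : HasDerivAt (fun x : ℝ => Real.arccos x/4)
        (-(1 / Real.sqrt (1 - s ^ 2))/4) s :=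
      (Real.hasDerivAt_arccos (by linarith) (by linarith)).div_const 4
    have d3 : HasDerivAt (fun x : ℝ => (Real.sqrt (1 - x ^ 2) * (U ℝ 3).eval x)/16)
        ((-(4:ℝ) * (T ℝ 4).eval s / Real.sqrt (1 - s ^ 2))/16) s := by
      have := (WU_hasDeriv' 4 h1 h2).div_const 16
      convert this using 2 <;> (try rfl) <;> norm_num
    have := (d1.add d2).add d3
    convert this using 1 <;> try rfl
    have hT2 : (T ℝ 2).eval s = 2*s^2 - 1 := by rw [T_two]; simp
    have hid := congr_arg (Polynomial.eval s) (T_mul_T ℝ 2 2)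
    norm_num [eval_mul, eval_add, T_zero, eval_one] at hid
    rw [hT2] at hid ⊢
    have hT4 : (T ℝ 4).eval s = 2*(2*s^2-1)^2 - 1 := by linarith [hid]
    rw [hT4]
    linear_combination (2*s^2-1)*hWW
  have hsq : Continuous fun s : ℝ => Real.sqrt (1 - s ^ 2) :=
    Real.continuous_sqrt.comp (continuous_const.sub (continuous_pow 2))
  have hcont : ContinuousOn f (Icc (-1:ℝ) 1) := by
    apply Continuous.continuousOn
    exact (((hsq.mul (U ℝ 1).continuous).neg.div_const 4).add
      (Real.continuous_arccos.div_const 4)).add ((hsq.mul (U ℝ 3).continuous).div_const 16)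
  have hintg : Continuous fun s : ℝ => (T ℝ 2).eval s * Real.sqrt (1 - s ^ 2) :=
    (T ℝ 2).continuous.mul hsq
  have hFTC := integral_eq_sub_of_hasDeriv_right_of_le (by norm_num : (-1:ℝ) ≤ 1) hcont
    (fun x hx => (hderiv x hx).hasDerivWithinAt) (hintg.intervalIntegrable _ _)
  rw [hFTC, hf]
  norm_num [Real.arccos_one, Real.arccos_neg_one]

noncomputable def H0 (r x : ℝ) : ℝ :=
  Real.sqrt (1 - x ^ 2) + (-r) * Real.arcsin x
    + (-Real.sqrt (1 - r ^ 2)) * Real.log (1 - x*r + Real.sqrt (1 - x ^ 2) * Real.sqrt (1 - r ^ 2))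
    + Real.sqrt (1 - r ^ 2) * Real.log (x - r)

lemma H0_hasDeriv {r s : ℝ} (hr1 : -1 < r) (hr2 : r < 1) (h1 : -1 < s) (h2 : s < 1)
    (hsr : s ≠ r) :
    HasDerivAt (H0 r) (Real.sqrt (1 - s ^ 2) / (s - r)) s := by
  have hpos : 0 < 1 - s ^ 2 := by nlinarith
  have hposr : 0 < 1 - r ^ 2 := by nlinarith
  have hW : Real.sqrt (1 - s ^ 2) ≠ 0 := by positivity
  have hV : Real.sqrt (1 - r ^ 2) ≠ 0 := by positivity
  have hW2 : Real.sqrt (1 - s ^ 2) ^ 2 = 1 - s ^ 2 := Real.sq_sqrt hpos.le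
  have hV2 : Real.sqrt (1 - r ^ 2) ^ 2 = 1 - r ^ 2 := Real.sq_sqrt hposr.le
  have hWle : Real.sqrt (1 - s ^ 2) ≥ 0 := Real.sqrt_nonneg _
  have hVle : Real.sqrt (1 - r ^ 2) ≥ 0 := Real.sqrt_nonneg _
  have hgpos : 0 < 1 - s*r + Real.sqrt (1 - s ^ 2) * Real.sqrt (1 - r ^ 2) := by
    have : s*r < 1 := by nlinarith
    nlinarith [mul_nonneg hWle hVle]
  have hsub : s - r ≠ 0 := sub_ne_zero.mpr hsr
  have dg : HasDerivAt (fun x : ℝ => 1 - x*r + Real.sqrt (1 - x ^ 2) * Real.sqrt (1 - r ^ 2))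
      (-r + (-s / Real.sqrt (1 - s ^ 2)) * Real.sqrt (1 - r ^ 2)) s := by
    have h1' : HasDerivAt (fun x : ℝ => 1 - x*r) (-r) s := by
      simpa using ((hasDerivAt_id s).mul_const r).const_sub 1
    exact h1'.add ((sqrtW_hasDeriv h1 h2).mul_const _)
  have dlogg := (Real.hasDerivAt_log (ne_of_gt hgpos)).comp s dg
  have dlogsr := (Real.hasDerivAt_log hsub).comp s ((hasDerivAt_id s).sub_const r)
  have darcsin := Real.hasDerivAt_arcsin (fun h => absurd (h ▸ h1) (lt_irrefl _) : s ≠ -1) (ne_of_lt h2)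
  have h := (((sqrtW_hasDeriv h1 h2).add (darcsin.const_mul (-r))).add
      (dlogg.const_mul (-Real.sqrt (1 - r ^ 2)))).add (dlogsr.const_mul (Real.sqrt (1 - r ^ 2)))
  convert h using 1 <;> try rfl
  field_simp
  linear_combination (Real.sqrt (1-s^2)*Real.sqrt (1-r^2) - (s-r)*r) * hW2 + (-Real.sqrt (1-s^2)^2 - (s-r)*s) * hV2

lemma H0_contAt {r x : ℝ} (hr1 : -1 < r) (hr2 : r < 1) (hx1 : -1 ≤ x) (hx2 : x ≤ 1)
    (hxr : x ≠ r) : ContinuousAt (H0 r) x := by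
  have hsq : Continuous fun s : ℝ => Real.sqrt (1 - s ^ 2) :=
    Real.continuous_sqrt.comp (continuous_const.sub (continuous_pow 2))
  have hgpos : 0 < 1 - x*r + Real.sqrt (1 - x ^ 2) * Real.sqrt (1 - r ^ 2) := by
    have h1 : x*r < 1 := by
      nlinarith [mul_nonneg (by linarith : (0:ℝ) ≤ 1+x) (by linarith : (0:ℝ) ≤ 1-r),
        mul_nonneg (by linarith : (0:ℝ) ≤ 1-x) (by linarith : (0:ℝ) ≤ 1+r)]
    nlinarith [mul_nonneg (Real.sqrt_nonneg (1 - x^2)) (Real.sqrt_nonneg (1 - r^2))]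
  have hg : ContinuousAt (fun s : ℝ => 1 - s*r + Real.sqrt (1 - s ^ 2) * Real.sqrt (1 - r ^ 2)) x :=
    ((continuous_const.sub (continuous_id.mul continuous_const)).add
      (hsq.mul continuous_const)).continuousAt
  have hlogg : ContinuousAt (fun s : ℝ =>
      Real.log (1 - s*r + Real.sqrt (1 - s ^ 2) * Real.sqrt (1 - r ^ 2))) x :=
    hg.log (ne_of_gt hgpos)
  have hsub : ContinuousAt (fun s : ℝ => s - r) x :=
    (continuous_id.sub continuous_const).continuousAt
  have hlogsr : ContinuousAt (fun s : ℝ => Real.log (s - r)) x :=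
    hsub.log (sub_ne_zero.mpr hxr)
  exact ((((hsq.continuousAt).add ((continuous_const.mul Real.continuous_arcsin).continuousAt)).add
    (hlogg.const_mul _)).add (hlogsr.const_mul _))

lemma H0_FTC {r a b : ℝ} (hr1 : -1 < r) (hr2 : r < 1) (ha : -1 ≤ a) (hb : b ≤ 1) (hab : a ≤ b)
    (hrab : r ∉ Icc a b) :
    ∫ s in a..b, Real.sqrt (1 - s ^ 2) / (s - r) = H0 r b - H0 r a := by
  have hcont : ContinuousOn (H0 r) (Icc a b) := by
    intro x hx
    exact (H0_contAt hr1 hr2 (le_trans ha hx.1) (le_trans hx.2 hb)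
      (fun h => hrab (h ▸ hx))).continuousWithinAt
  have hderiv : ∀ x ∈ Ioo a b, HasDerivWithinAt (H0 r) (Real.sqrt (1 - x ^ 2) / (x - r)) (Ioi x) x := by
    intro x hx
    have hx1 : -1 < x := lt_of_le_of_lt ha hx.1
    have hx2 : x < 1 := lt_of_lt_of_le hx.2 hb
    have hxr : x ≠ r := fun h => hrab (h ▸ ⟨hx.1.le, hx.2.le⟩)
    exact (H0_hasDeriv hr1 hr2 hx1 hx2 hxr).hasDerivWithinAt
  have hint : IntervalIntegrable (fun s => Real.sqrt (1 - s ^ 2) / (s - r)) volume a b := by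
    apply ContinuousOn.intervalIntegrable
    rw [uIcc_of_le hab]
    apply ContinuousOn.div
    · exact (Real.continuous_sqrt.comp (continuous_const.sub (continuous_pow 2))).continuousOn
    · exact (continuous_id.sub continuous_const).continuousOn
    · intro x hx
      exact sub_ne_zero.mpr (fun h => hrab (h ▸ hx))
  exact integral_eq_sub_of_hasDeriv_right_of_le hab hcont hderiv hint

noncomputable def gA (r : ℝ) : ℕ → ℝ
  | 0 => -(Real.pi * r)
  | 1 => Real.pi/2 - Real.pi * r^2
  | m+2 => 2*(if m = 1 then -(Real.pi/4) else 0) + 2*r*gA r (m+1) - gA r m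

lemma gA_claimB (r : ℝ) : ∀ m : ℕ,
    gA r (m+2) = Real.pi/2 * ((T ℝ ((m:ℤ)+1)).eval r - (T ℝ ((m:ℤ)+3)).eval r) ∧
    gA r (m+3) = Real.pi/2 * ((T ℝ ((m:ℤ)+2)).eval r - (T ℝ ((m:ℤ)+4)).eval r) := by
  intro m
  induction m with
  | zero =>
    have hT3 : T ℝ 3 = 2*X*(T ℝ 2) - X := by
      have := T_add_two ℝ 1; norm_num at this; rw [this]
    have hT4 : T ℝ 4 = 2*X*(T ℝ 3) - T ℝ 2 := by
      have := T_add_two ℝ 2; norm_num at this; rw [this]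
    constructor
    · show gA r 2 = _
      simp only [gA]
      norm_num [hT3, T_two, T_one]
      ring
    · show gA r 3 = _
      simp only [gA]
      norm_num [hT4, hT3, T_two, T_one]
      ring
  | succ m ih =>
    obtain ⟨ih1, ih2⟩ := ih
    refine ⟨by exact_mod_cast ih2, ?_⟩
    show gA r (m+4) = _
    have hunf : gA r (m+4) = 2*(if m+2 = 1 then -(Real.pi/4) else 0) + 2*r*gA r (m+3) - gA r (m+2) := by
      simp only [gA]
    rw [hunf, if_neg (by omega)]
    rw [ih1, ih2]
    have e1 := congr_arg (Polynomial.eval r) (T_add_two ℝ ((m:ℤ)+1))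
    have e2 := congr_arg (Polynomial.eval r) (T_add_two ℝ ((m:ℤ)+3))
    have i1 : (m:ℤ)+1+2 = (m:ℤ)+3 := by ring
    have i2 : (m:ℤ)+3+2 = (m:ℤ)+5 := by ring
    rw [i1] at e1; rw [i2] at e2
    simp only [eval_mul, eval_sub, eval_ofNat, eval_X] at e1 e2
    have i3 : ((m:ℤ)+1)+1 = (m:ℤ)+2 := by ring
    have i4 : ((m:ℤ)+3)+1 = (m:ℤ)+4 := by ring
    rw [i3] at e1; rw [i4] at e2
    have i5 : (((m:ℕ)+1:ℕ):ℤ)+2 = (m:ℤ)+3 := by push_cast; ring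
    have i6 : (((m:ℕ)+1:ℕ):ℤ)+4 = (m:ℤ)+5 := by push_cast; ring
    rw [i5, i6]
    linear_combination -(Real.pi/2) * e1 + (Real.pi/2) * e2

lemma cont_sqrtW : Continuous fun s : ℝ => Real.sqrt (1 - s ^ 2) :=
  Real.continuous_sqrt.comp (continuous_const.sub (continuous_pow 2))

lemma tendsto_small_integral (r : ℝ) (f : ℝ → ℝ) (hf : Continuous f) :
    Tendsto (fun ε => ∫ s in (r-ε)..(r+ε), f s) (𝓝[>] (0:ℝ)) (𝓝 0) := by
  obtain ⟨M, hM⟩ := (isCompact_Icc (a := r-1) (b := r+1)).exists_bound_of_continuousOn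
    hf.continuousOn
  have hev : ∀ᶠ ε in 𝓝[>] (0:ℝ), ‖∫ s in (r-ε)..(r+ε), f s‖ ≤ M * (2*ε) := by
    filter_upwards [Ioo_mem_nhdsGT_of_mem (Set.left_mem_Ico.mpr one_pos)] with ε hε
    have h := intervalIntegral.norm_integral_le_of_norm_le_const
      (C := M) (f := f) (a := r-ε) (b := r+ε) ?_
    · calc ‖∫ s in (r-ε)..(r+ε), f s‖ ≤ M * |(r+ε) - (r-ε)| := h
        _ = M * (2*ε) := by rw [abs_of_nonneg (by linarith [hε.1])]; ring
    · intro x hx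
      apply hM
      have := Set.uIoc_subset_uIcc (α := ℝ) (a := r-ε) (b := r+ε) hx
      rw [Set.uIcc_of_le (by linarith [hε.1])] at this
      constructor <;> [linarith [this.1, hε.2.le]; linarith [this.2, hε.2.le]]
  have hb : Tendsto (fun ε : ℝ => M * (2*ε)) (𝓝[>] (0:ℝ)) (𝓝 0) := by
    have : Tendsto (fun ε : ℝ => M * (2*ε)) (𝓝 (0:ℝ)) (𝓝 (M * (2*0))) :=
      (tendsto_id.const_mul 2).const_mul M
    simpa using this.mono_left nhdsWithin_le_nhds
  exact squeeze_zero_norm' hev hb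

lemma twosided_tendsto (r : ℝ) (f : ℝ → ℝ) (hf : Continuous f) :
    Tendsto (fun ε => (∫ s in (-1:ℝ)..(r-ε), f s) + ∫ s in (r+ε)..(1:ℝ), f s) (𝓝[>] (0:ℝ))
      (𝓝 (∫ s in (-1:ℝ)..(1:ℝ), f s)) := by
  have heq : ∀ ε : ℝ, (∫ s in (-1:ℝ)..(r-ε), f s) + ∫ s in (r+ε)..(1:ℝ), f s
      = (∫ s in (-1:ℝ)..(1:ℝ), f s) - ∫ s in (r-ε)..(r+ε), f s := by
    intro ε
    have h1 := intervalIntegral.integral_add_adjacent_intervals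
      (hf.intervalIntegrable (μ := volume) (-1) (r-ε)) (hf.intervalIntegrable (μ := volume) (r-ε) (r+ε))
    have h2 := intervalIntegral.integral_add_adjacent_intervals
      (hf.intervalIntegrable (μ := volume) (-1) (r+ε)) (hf.intervalIntegrable (μ := volume) (r+ε) 1)
    linarith
  rw [show (fun ε => (∫ s in (-1:ℝ)..(r-ε), f s) + ∫ s in (r+ε)..(1:ℝ), f s)
      = fun ε => (∫ s in (-1:ℝ)..(1:ℝ), f s) - ∫ s in (r-ε)..(r+ε), f s from funext heq]
  have := tendsto_const_nhds (x := ∫ s in (-1:ℝ)..(1:ℝ), f s) (f := 𝓝[>] (0:ℝ)) |>.sub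
    (tendsto_small_integral r f hf)
  simpa using this

/-- Let `n ≥ 2` and let `F` be the Cauchy principal value
`F(r) = ⨍_{-1}^{1} T_n(s)√(1-s²)/(s-r) ds` on `(-1,1)`. Then `F` is differentiable on
`(-1,1)` with `F'(r) = (π/2) ((n-1) U_{n-2}(r) - (n+1) U_n(r))`, the Hadamard finite-part
integral `⨎_{-1}^{1} T_n(s)√(1-s²)/(s-r)² ds`. -/
theorem hfp2_T_m1 (n : ℕ) (hn : 2 ≤ n) (F : ℝ → ℝ)
    (hF : ∀ r ∈ Set.Ioo (-1 : ℝ) 1,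
      Filter.Tendsto
        (fun ε : ℝ =>
          (∫ s in (-1 : ℝ)..(r - ε),
              (Polynomial.Chebyshev.T ℝ n).eval s * Real.sqrt (1 - s ^ 2) / (s - r)) +
          ∫ s in (r + ε)..(1 : ℝ),
              (Polynomial.Chebyshev.T ℝ n).eval s * Real.sqrt (1 - s ^ 2) / (s - r))
        (nhdsWithin 0 (Set.Ioi 0)) (nhds (F r))) :
    ∀ r ∈ Set.Ioo (-1 : ℝ) 1,
      HasDerivAt F
        (Real.pi / 2 *
          (((n : ℝ) - 1) * (Polynomial.Chebyshev.U ℝ ((n : ℤ) - 2)).eval r -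
           ((n : ℝ) + 1) * (Polynomial.Chebyshev.U ℝ (n : ℤ)).eval r)) r := by
  -- Step 1: compute the value of F on (-1,1).
  have hval : ∀ r ∈ Set.Ioo (-1:ℝ) 1, F r = gA r n := by
    intro r hr
    obtain ⟨hr1, hr2⟩ := hr
    have hδ : 0 < min (1+r) (1-r) := lt_min (by linarith) (by linarith)
    have hmemδ : Ioo (0:ℝ) (min (1+r) (1-r)) ∈ 𝓝[>] (0:ℝ) :=
      Ioo_mem_nhdsGT_of_mem (Set.left_mem_Ico.mpr hδ)
    have hmem : ∀ ε ∈ Ioo (0:ℝ) (min (1+r) (1-r)),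
        -1 ≤ r - ε ∧ r - ε < r ∧ r < r + ε ∧ r + ε ≤ 1 := by
      intro ε hε
      have h1 := lt_of_lt_of_le hε.2 (min_le_left _ _)
      have h2 := lt_of_lt_of_le hε.2 (min_le_right _ _)
      exact ⟨by linarith, by linarith [hε.1], by linarith [hε.1], by linarith⟩
    have hInt : ∀ (p : Polynomial ℝ) (a b : ℝ), r ∉ uIcc a b →
        IntervalIntegrable (fun s => p.eval s * Real.sqrt (1-s^2)/(s-r)) volume a b := by
      intro p a b hrab
      apply ContinuousOn.intervalIntegrable
      apply ContinuousOn.div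
      · exact (p.continuous.mul cont_sqrtW).continuousOn
      · exact (continuous_id.sub continuous_const).continuousOn
      · intro x hx
        exact sub_ne_zero.mpr (fun h => hrab (h ▸ hx))
    set I : ℕ → ℝ → ℝ := fun m ε =>
      (∫ s in (-1:ℝ)..(r-ε), (T ℝ (m:ℤ)).eval s * Real.sqrt (1 - s ^ 2) / (s - r)) +
      ∫ s in (r+ε)..(1:ℝ), (T ℝ (m:ℤ)).eval s * Real.sqrt (1 - s ^ 2) / (s - r) with hIdef
    -- base case 0
    set φ : ℝ → ℝ := fun s =>
      Real.sqrt (1 - s ^ 2) + (-r) * Real.arcsin s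
        + (-Real.sqrt (1 - r ^ 2)) * Real.log (1 - s*r + Real.sqrt (1 - s ^ 2) * Real.sqrt (1 - r ^ 2))
      with hφdef
    have hH0φ : ∀ s : ℝ, H0 r s = φ s + Real.sqrt (1 - r ^ 2) * Real.log (s - r) := by
      intro s; rw [hφdef, H0]
    have hφcont : ContinuousAt φ r := by
      have hgpos : 0 < 1 - r*r + Real.sqrt (1 - r ^ 2) * Real.sqrt (1 - r ^ 2) := by
        nlinarith [mul_nonneg (Real.sqrt_nonneg (1 - r^2)) (Real.sqrt_nonneg (1 - r^2))]
      have hg : ContinuousAt (fun s : ℝ =>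
          1 - s*r + Real.sqrt (1 - s ^ 2) * Real.sqrt (1 - r ^ 2)) r :=
        ((continuous_const.sub (continuous_id.mul continuous_const)).add
          (cont_sqrtW.mul continuous_const)).continuousAt
      exact ((cont_sqrtW.continuousAt).add
        ((continuous_const.mul Real.continuous_arcsin).continuousAt)).add
        ((hg.log (ne_of_gt hgpos)).const_mul _)
    have base0 : Tendsto (I 0) (𝓝[>] (0:ℝ)) (𝓝 (gA r 0)) := by
      have heq : ∀ᶠ ε in 𝓝[>] (0:ℝ),
          (H0 r 1 - H0 r (-1)) + (φ (r-ε) - φ (r+ε)) = I 0 ε := by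
        filter_upwards [hmemδ] with ε hε
        obtain ⟨ha, hb, hc, hd⟩ := hmem ε hε
        have hL : ∫ s in (-1:ℝ)..(r-ε), (T ℝ ((0:ℕ):ℤ)).eval s * Real.sqrt (1 - s ^ 2) / (s - r)
            = H0 r (r-ε) - H0 r (-1) := by
          simp only [Nat.cast_zero, T_zero, eval_one, one_mul]
          exact H0_FTC hr1 hr2 (le_refl (-1)) (by linarith) ha
            (fun h => absurd h.2 (not_le.mpr hb))
        have hR : ∫ s in (r+ε)..(1:ℝ), (T ℝ ((0:ℕ):ℤ)).eval s * Real.sqrt (1 - s ^ 2) / (s - r)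
            = H0 r 1 - H0 r (r+ε) := by
          simp only [Nat.cast_zero, T_zero, eval_one, one_mul]
          exact H0_FTC hr1 hr2 (by linarith) (le_refl 1) hd
            (fun h => absurd h.1 (not_le.mpr hc))
        rw [hIdef]
        simp only []
        rw [hL, hR, hH0φ (r-ε), hH0φ (r+ε),
          show r - ε - r = -ε by ring, show r + ε - r = ε by ring, Real.log_neg_eq_log]
        ring
      have hlim : Tendsto (fun ε => (H0 r 1 - H0 r (-1)) + (φ (r-ε) - φ (r+ε)))
          (𝓝[>] (0:ℝ)) (𝓝 ((H0 r 1 - H0 r (-1)) + (φ r - φ r))) := by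
        have t1 : Tendsto (fun ε : ℝ => r - ε) (𝓝[>] (0:ℝ)) (𝓝 r) := by
          have : Tendsto (fun ε : ℝ => r - ε) (𝓝 (0:ℝ)) (𝓝 (r - 0)) :=
            tendsto_const_nhds.sub tendsto_id
          simpa using this.mono_left nhdsWithin_le_nhds
        have t2 : Tendsto (fun ε : ℝ => r + ε) (𝓝[>] (0:ℝ)) (𝓝 r) := by
          have : Tendsto (fun ε : ℝ => r + ε) (𝓝 (0:ℝ)) (𝓝 (r + 0)) :=
            tendsto_const_nhds.add tendsto_id
          simpa using this.mono_left nhdsWithin_le_nhds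
        exact tendsto_const_nhds.add ((hφcont.tendsto.comp t1).sub (hφcont.tendsto.comp t2))
      have hval1 : H0 r 1 - H0 r (-1) = -(π * r) := by
        have e1 : H0 r 1 = -r * (π/2) := by
          rw [H0]
          rw [show (1:ℝ) - 1^2 = 0 by norm_num, Real.sqrt_zero, Real.arcsin_one]
          rw [show (1:ℝ) - 1*r + 0 * Real.sqrt (1 - r ^ 2) = 1 - r by ring,
            show (1:ℝ) - r = 1 - r from rfl]
          ring
        have e2 : H0 r (-1) = r * (π/2) := by
          rw [H0]
          rw [show (1:ℝ) - (-1)^2 = 0 by norm_num, Real.sqrt_zero, Real.arcsin_neg_one]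
          rw [show (1:ℝ) - (-1)*r + 0 * Real.sqrt (1 - r ^ 2) = 1 + r by ring,
            show (-1:ℝ) - r = -(1+r) by ring, Real.log_neg_eq_log]
          ring
        rw [e1, e2]; ring
      have := hlim.congr' heq
      simpa [hval1, gA] using this
    -- base case 1
    have base1 : Tendsto (I 1) (𝓝[>] (0:ℝ)) (𝓝 (gA r 1)) := by
      have heq : ∀ᶠ ε in 𝓝[>] (0:ℝ),
          ((∫ s in (-1:ℝ)..(r-ε), Real.sqrt (1 - s ^ 2)) +
            ∫ s in (r+ε)..(1:ℝ), Real.sqrt (1 - s ^ 2)) + r * I 0 ε = I 1 ε := by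
        filter_upwards [hmemδ] with ε hε
        obtain ⟨ha, hb, hc, hd⟩ := hmem ε hε
        have key : ∀ (a b : ℝ), r ∉ uIcc a b →
            ∫ s in a..b, (T ℝ ((1:ℕ):ℤ)).eval s * Real.sqrt (1 - s ^ 2) / (s - r)
            = (∫ s in a..b, Real.sqrt (1 - s ^ 2)) +
              r * ∫ s in a..b, (T ℝ ((0:ℕ):ℤ)).eval s * Real.sqrt (1 - s ^ 2) / (s - r) := by
          intro a b hrab
          have hcg : ∀ s ∈ uIcc a b,
              (T ℝ ((1:ℕ):ℤ)).eval s * Real.sqrt (1 - s ^ 2) / (s - r)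
              = Real.sqrt (1 - s ^ 2) +
                r * ((T ℝ ((0:ℕ):ℤ)).eval s * Real.sqrt (1 - s ^ 2) / (s - r)) := by
            intro s hs
            have hsr : s - r ≠ 0 := sub_ne_zero.mpr (fun h => hrab (h ▸ hs))
            simp only [Nat.cast_zero, Nat.cast_one, T_zero, T_one, eval_one, eval_X, one_mul]
            have hc : (s - r)/(s - r) = 1 := div_self hsr
            linear_combination Real.sqrt (1 - s ^ 2) * hc
          rw [intervalIntegral.integral_congr hcg, intervalIntegral.integral_add
            (cont_sqrtW.intervalIntegrable a b) ((hInt (T ℝ ((0:ℕ):ℤ)) a b hrab).const_mul r),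
            intervalIntegral.integral_const_mul]
        have hrL : r ∉ uIcc (-1:ℝ) (r-ε) := by
          rw [uIcc_of_le (by linarith : (-1:ℝ) ≤ r-ε)]
          exact fun h => absurd h.2 (not_le.mpr hb)
        have hrR : r ∉ uIcc (r+ε) (1:ℝ) := by
          rw [uIcc_of_le (by linarith : r+ε ≤ (1:ℝ))]
          exact fun h => absurd h.1 (not_le.mpr hc)
        rw [hIdef]
        simp only []
        rw [key _ _ hrL, key _ _ hrR]
        ring
      have hlim : Tendsto (fun ε => ((∫ s in (-1:ℝ)..(r-ε), Real.sqrt (1 - s ^ 2)) +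
            ∫ s in (r+ε)..(1:ℝ), Real.sqrt (1 - s ^ 2)) + r * I 0 ε) (𝓝[>] (0:ℝ))
          (𝓝 ((∫ s in (-1:ℝ)..(1:ℝ), Real.sqrt (1 - s ^ 2)) + r * gA r 0)) :=
        (twosided_tendsto r _ cont_sqrtW).add (base0.const_mul r)
      have := hlim.congr' heq
      rw [integral_sqrt_one_sub_sq] at this
      have hv : π/2 + r * gA r 0 = gA r 1 := by simp [gA]; ring
      rwa [hv] at this
    -- inductive step
    have claimA : ∀ m : ℕ, Tendsto (I m) (𝓝[>] (0:ℝ)) (𝓝 (gA r m)) ∧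
        Tendsto (I (m+1)) (𝓝[>] (0:ℝ)) (𝓝 (gA r (m+1))) := by
      intro m
      induction m with
      | zero => exact ⟨base0, base1⟩
      | succ m ih =>
        obtain ⟨ih1, ih2⟩ := ih
        refine ⟨ih2, ?_⟩
        -- limit of the regular part
        have hJp : Tendsto (fun ε => (∫ s in (-1:ℝ)..(r-ε),
              (T ℝ ((m:ℤ)+1)).eval s * Real.sqrt (1 - s ^ 2)) +
            ∫ s in (r+ε)..(1:ℝ), (T ℝ ((m:ℤ)+1)).eval s * Real.sqrt (1 - s ^ 2))
            (𝓝[>] (0:ℝ)) (𝓝 (if m = 1 then -(π/4) else 0)) := by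
          have h2s := twosided_tendsto r (fun s => (T ℝ ((m:ℤ)+1)).eval s * Real.sqrt (1 - s ^ 2))
            ((T ℝ ((m:ℤ)+1)).continuous.mul cont_sqrtW)
          have hevalc : (∫ s in (-1:ℝ)..(1:ℝ), (T ℝ ((m:ℤ)+1)).eval s * Real.sqrt (1 - s ^ 2))
              = (if m = 1 then -(π/4) else 0) := by
            by_cases hm : m = 1
            · subst hm
              rw [if_pos rfl, show ((1:ℕ):ℤ)+1 = 2 by norm_num]
              exact integral_T2W
            · rw [if_neg hm]
              exact integral_TW_of_ne _ (by omega) (by omega) (by omega)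
          rwa [hevalc] at h2s
        have heq : ∀ᶠ ε in 𝓝[>] (0:ℝ),
            2 * ((∫ s in (-1:ℝ)..(r-ε), (T ℝ ((m:ℤ)+1)).eval s * Real.sqrt (1 - s ^ 2)) +
              ∫ s in (r+ε)..(1:ℝ), (T ℝ ((m:ℤ)+1)).eval s * Real.sqrt (1 - s ^ 2)) +
            2 * r * I (m+1) ε - I m ε = I (m+2) ε := by
          filter_upwards [hmemδ] with ε hε
          obtain ⟨ha, hb, hc, hd⟩ := hmem ε hε
          have key : ∀ (a b : ℝ), r ∉ uIcc a b →
              ∫ s in a..b, (T ℝ (((m+2:ℕ)):ℤ)).eval s * Real.sqrt (1 - s ^ 2) / (s - r)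
              = 2 * (∫ s in a..b, (T ℝ ((m:ℤ)+1)).eval s * Real.sqrt (1 - s ^ 2)) +
                2 * r * (∫ s in a..b, (T ℝ (((m+1:ℕ)):ℤ)).eval s * Real.sqrt (1 - s ^ 2) / (s - r)) -
                ∫ s in a..b, (T ℝ ((m:ℕ):ℤ)).eval s * Real.sqrt (1 - s ^ 2) / (s - r) := by
            intro a b hrab
            have hcg : ∀ s ∈ uIcc a b,
                (T ℝ (((m+2:ℕ)):ℤ)).eval s * Real.sqrt (1 - s ^ 2) / (s - r)
                = 2 * ((T ℝ ((m:ℤ)+1)).eval s * Real.sqrt (1 - s ^ 2)) +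
                  (2 * r * ((T ℝ (((m+1:ℕ)):ℤ)).eval s * Real.sqrt (1 - s ^ 2) / (s - r)) -
                  (T ℝ ((m:ℕ):ℤ)).eval s * Real.sqrt (1 - s ^ 2) / (s - r)) := by
              intro s hs
              have hsr : s - r ≠ 0 := sub_ne_zero.mpr (fun h => hrab (h ▸ hs))
              have hT := congr_arg (Polynomial.eval s) (T_add_two ℝ (m:ℤ))
              simp only [eval_mul, eval_sub, eval_ofNat, eval_X] at hT
              push_cast
              have hc : (s - r)/(s - r) = 1 := div_self hsr
              linear_combination (Real.sqrt (1 - s ^ 2)/(s-r)) * hT +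
                (2*(T ℝ ((m:ℤ)+1)).eval s * Real.sqrt (1 - s ^ 2)) * hc
            rw [intervalIntegral.integral_congr hcg]
            rw [intervalIntegral.integral_add (f := fun s => 2 * ((T ℝ ((m:ℤ)+1)).eval s * Real.sqrt (1 - s ^ 2)))
              ((((T ℝ ((m:ℤ)+1)).continuous.mul cont_sqrtW).intervalIntegrable a b).const_mul 2)
              (((hInt (T ℝ (((m+1:ℕ)):ℤ)) a b hrab).const_mul (2*r)).sub
                (hInt (T ℝ ((m:ℕ):ℤ)) a b hrab)),
              intervalIntegral.integral_sub
                ((hInt (T ℝ (((m+1:ℕ)):ℤ)) a b hrab).const_mul (2*r))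
                (hInt (T ℝ ((m:ℕ):ℤ)) a b hrab),
              intervalIntegral.integral_const_mul, intervalIntegral.integral_const_mul]
            ring
          have hrL : r ∉ uIcc (-1:ℝ) (r-ε) := by
            rw [uIcc_of_le (by linarith : (-1:ℝ) ≤ r-ε)]
            exact fun h => absurd h.2 (not_le.mpr hb)
          have hrR : r ∉ uIcc (r+ε) (1:ℝ) := by
            rw [uIcc_of_le (by linarith : r+ε ≤ (1:ℝ))]
            exact fun h => absurd h.1 (not_le.mpr hc)
          rw [hIdef]
          simp only []
          rw [key _ _ hrL, key _ _ hrR]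
          ring
        have hlim : Tendsto (fun ε =>
            2 * ((∫ s in (-1:ℝ)..(r-ε), (T ℝ ((m:ℤ)+1)).eval s * Real.sqrt (1 - s ^ 2)) +
              ∫ s in (r+ε)..(1:ℝ), (T ℝ ((m:ℤ)+1)).eval s * Real.sqrt (1 - s ^ 2)) +
            2 * r * I (m+1) ε - I m ε) (𝓝[>] (0:ℝ))
            (𝓝 (2 * (if m = 1 then -(π/4) else 0) + 2 * r * gA r (m+1) - gA r m)) :=
          ((hJp.const_mul 2).add (ih2.const_mul (2*r))).sub ih1
        have := hlim.congr' heq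
        have hgA : gA r (m+2) = 2 * (if m = 1 then -(π/4) else 0) + 2 * r * gA r (m+1) - gA r m := by
          simp [gA]
        rwa [← hgA] at this
    exact tendsto_nhds_unique (hF r ⟨hr1, hr2⟩) ((claimA n).1)
  -- Step 2: differentiate.
  intro r hr
  obtain ⟨m, rfl⟩ : ∃ m, n = m + 2 := ⟨n - 2, by omega⟩
  have hval' : ∀ x ∈ Set.Ioo (-1:ℝ) 1,
      F x = Real.pi/2 * ((T ℝ ((m:ℤ)+1)).eval x - (T ℝ ((m:ℤ)+3)).eval x) := by
    intro x hx
    rw [hval x hx, (gA_claimB x m).1]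
  have hd1 : HasDerivAt (fun x : ℝ => (T ℝ ((m:ℤ)+1)).eval x)
      (((m:ℝ)+1) * (U ℝ (m:ℤ)).eval r) r := by
    have := Polynomial.hasDerivAt (T ℝ ((m:ℤ)+1)) r
    rw [T_derivative_eq_U] at this
    simpa [eval_mul, eval_intCast] using this
  have hd2 : HasDerivAt (fun x : ℝ => (T ℝ ((m:ℤ)+3)).eval x)
      (((m:ℝ)+3) * (U ℝ ((m:ℤ)+2)).eval r) r := by
    have := Polynomial.hasDerivAt (T ℝ ((m:ℤ)+3)) r
    rw [T_derivative_eq_U] at this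
    have hidx : (m:ℤ)+3-1 = (m:ℤ)+2 := by ring
    rw [hidx] at this
    simpa [eval_mul, eval_intCast] using this
  have hFG : F =ᶠ[𝓝 r] fun x => Real.pi/2 * ((T ℝ ((m:ℤ)+1)).eval x - (T ℝ ((m:ℤ)+3)).eval x) :=
    Filter.eventuallyEq_of_mem (isOpen_Ioo.mem_nhds hr) hval'
  have hG := (hd1.sub hd2).const_mul (Real.pi/2)
  have hkey : HasDerivAt F
      (Real.pi/2 * (((m:ℝ)+1) * (U ℝ (m:ℤ)).eval r - ((m:ℝ)+3) * (U ℝ ((m:ℤ)+2)).eval r)) r :=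
    hG.congr_of_eventuallyEq hFG
  have e1 : ((m+2:ℕ):ℤ) - 2 = (m:ℤ) := by push_cast; ring
  have e2 : ((m+2:ℕ):ℤ) = (m:ℤ) + 2 := by push_cast; ring
  rw [e1, e2]
  convert hkey using 1
  push_cast
  ring
end

section
/- Let n ≥ 0 be an integer and define F : (−1, 1) → ℝ by F(r) = ⨍_{−1}^{1} U_n(s)·√(1−s²)/(s−r) ds (Cauchy principal value). Then F is differentiable at every r ∈ (−1, 1) and F′(r) = −π·(n+1)·U_n(r). (F′(r) is the Hadamard finite-part integral ⨎_{−1}^{1} U_n(s)·√(1−s²)/(s−r)² ds.) -/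
open Real Filter Set intervalIntegral MeasureTheory Polynomial.Chebyshev

lemma subst_cos {f : ℝ → ℝ} {a b : ℝ} (h0 : 0 ≤ a) (hab : a ≤ b) (hb : b ≤ π)
    (hf : ContinuousOn f (Icc (Real.cos b) (Real.cos a))) :
    ∫ s in Real.cos b..Real.cos a, f s = ∫ θ in a..b, f (Real.cos θ) * Real.sin θ := by
  have h := intervalIntegral.integral_comp_smul_deriv' (f := Real.cos)
    (f' := fun θ => -Real.sin θ) (g := f) (a := a) (b := b)
    (fun x _ => Real.hasDerivAt_cos x) ((Real.continuous_sin.neg).continuousOn)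
    (hf.mono ?_)
  · rw [intervalIntegral.integral_symm]
    rw [← h, ← intervalIntegral.integral_neg]
    apply intervalIntegral.integral_congr
    intro x _
    simp [mul_comm]
  · intro s hs
    obtain ⟨θ, hθ, rfl⟩ := hs
    rw [uIcc_of_le hab] at hθ
    constructor
    · exact Real.cos_le_cos_of_nonneg_of_le_pi (h0.trans hθ.1) hb hθ.2
    · exact Real.cos_le_cos_of_nonneg_of_le_pi h0 (hθ.2.trans hb) hθ.1

lemma sqrt_one_sub_cos_sq {θ : ℝ} (h0 : 0 ≤ θ) (hπ : θ ≤ π) :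
    Real.sqrt (1 - Real.cos θ ^ 2) = Real.sin θ := by
  rw [show (1 : ℝ) - Real.cos θ ^ 2 = Real.sin θ ^ 2 by
      have := Real.sin_sq_add_cos_sq θ; linarith]
  exact Real.sqrt_sq (Real.sin_nonneg_of_nonneg_of_le_pi h0 hπ)

lemma integral_cos_mul_pi (m : ℕ) (hm : m ≠ 0) :
    ∫ θ in (0:ℝ)..π, Real.cos (m * θ) = 0 := by
  have h := intervalIntegral.integral_comp_mul_left (a := (0:ℝ)) (b := π)
    (fun x => Real.cos x) (c := (m:ℝ)) (by exact_mod_cast hm)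
  rw [h, integral_cos]
  simp [Real.sin_nat_mul_pi]

lemma integral_U_sqrt (k : ℕ) :
    ∫ s in (-1:ℝ)..1, (U ℝ (k+1)).eval s * Real.sqrt (1 - s ^ 2) = 0 := by
  have h := subst_cos (f := fun s => (U ℝ (k+1)).eval s * Real.sqrt (1 - s ^ 2))
    (a := 0) (b := π) le_rfl Real.pi_pos.le le_rfl ?_
  · rw [Real.cos_pi, Real.cos_zero] at h
    rw [h]
    have hcong : ∀ θ ∈ uIcc (0:ℝ) π,
        (U ℝ (k+1)).eval (Real.cos θ) * Real.sqrt (1 - Real.cos θ ^ 2) * Real.sin θ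
          = (Real.cos (((k+1:ℕ):ℝ) * θ) - Real.cos (((k+3:ℕ):ℝ) * θ)) / 2 := by
      intro θ hθ
      rw [uIcc_of_le Real.pi_pos.le] at hθ
      rw [sqrt_one_sub_cos_sq hθ.1 hθ.2]
      have hU : (U ℝ (k+1)).eval (Real.cos θ) * Real.sin θ = Real.sin (((k:ℝ)+2) * θ) := by
        have := U_real_cos θ (k+1)
        push_cast at this ⊢
        convert this using 3 <;> push_cast <;> ring
      have h2 : Real.sin (((k:ℝ)+2) * θ) * Real.sin θ
          = (Real.cos (((k:ℝ)+1) * θ) - Real.cos (((k:ℝ)+3) * θ)) / 2 := by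
        have hc := Real.cos_sub_cos (((k:ℝ)+1) * θ) (((k:ℝ)+3) * θ)
        have e1 : ((((k:ℝ)+1) * θ + ((k:ℝ)+3) * θ) / 2) = ((k:ℝ)+2) * θ := by ring
        have e2 : ((((k:ℝ)+1) * θ - ((k:ℝ)+3) * θ) / 2) = -θ := by ring
        rw [e1, e2, Real.sin_neg] at hc
        linarith
      calc (U ℝ (k+1)).eval (Real.cos θ) * Real.sin θ * Real.sin θ
          = Real.sin (((k:ℝ)+2) * θ) * Real.sin θ := by rw [hU]
        _ = (Real.cos (((k:ℝ)+1) * θ) - Real.cos (((k:ℝ)+3) * θ)) / 2 := h2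
        _ = (Real.cos (((k+1:ℕ):ℝ) * θ) - Real.cos (((k+3:ℕ):ℝ) * θ)) / 2 := by push_cast; ring_nf
    rw [intervalIntegral.integral_congr hcong]
    have i1 : IntervalIntegrable (fun θ => Real.cos (((k+1:ℕ):ℝ) * θ)) MeasureTheory.volume 0 π :=
      (Real.continuous_cos.comp (continuous_const.mul continuous_id)).intervalIntegrable _ _
    have i2 : IntervalIntegrable (fun θ => Real.cos (((k+3:ℕ):ℝ) * θ)) MeasureTheory.volume 0 π :=
      (Real.continuous_cos.comp (continuous_const.mul continuous_id)).intervalIntegrable _ _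
    rw [intervalIntegral.integral_div, intervalIntegral.integral_sub i1 i2,
      integral_cos_mul_pi (k+1) (by omega), integral_cos_mul_pi (k+3) (by omega)]
    norm_num
  · apply ContinuousOn.mul
    · exact (Polynomial.continuous _).continuousOn
    · exact (Real.continuous_sqrt.comp (by continuity)).continuousOn

lemma split_tendsto (r : ℝ) {g : ℝ → ℝ} (hg : Continuous g) :
    Tendsto (fun ε : ℝ => (∫ s in (-1:ℝ)..(r-ε), g s) + ∫ s in (r+ε)..(1:ℝ), g s)
      (nhdsWithin 0 (Set.Ioi 0)) (nhds (∫ s in (-1:ℝ)..(1:ℝ), g s)) := by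
  have hint : ∀ a b : ℝ, IntervalIntegrable g volume a b := fun a b =>
    hg.intervalIntegrable a b
  have h1 : Continuous fun b => ∫ s in (-1:ℝ)..b, g s :=
    intervalIntegral.continuous_primitive hint (-1)
  have h2 : Continuous fun a => ∫ s in a..(1:ℝ), g s := by
    have h3 : Continuous fun a => -∫ s in (1:ℝ)..a, g s :=
      (intervalIntegral.continuous_primitive hint 1).neg
    refine h3.congr fun a => ?_
    rw [intervalIntegral.integral_symm, neg_neg]
  have hsub : Tendsto (fun ε : ℝ => r - ε) (nhdsWithin 0 (Set.Ioi 0)) (nhds r) := by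
    have : Tendsto (fun ε : ℝ => r - ε) (nhds 0) (nhds (r - 0)) :=
      (continuous_const.sub continuous_id).tendsto 0
    simpa using this.mono_left nhdsWithin_le_nhds
  have hadd : Tendsto (fun ε : ℝ => r + ε) (nhdsWithin 0 (Set.Ioi 0)) (nhds r) := by
    have : Tendsto (fun ε : ℝ => r + ε) (nhds 0) (nhds (r + 0)) :=
      (continuous_const.add continuous_id).tendsto 0
    simpa using this.mono_left nhdsWithin_le_nhds
  have t1 := (h1.tendsto r).comp hsub
  have t2 := (h2.tendsto r).comp hadd
  have := t1.add t2
  rwa [intervalIntegral.integral_add_adjacent_intervals (hint _ _) (hint _ _)] at this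

noncomputable def Gfun (r φ : ℝ) (θ : ℝ) : ℝ :=
  -Real.sin θ - θ * r + Real.sqrt (1-r^2) *
    (Real.log (Real.sin ((θ+φ)/2)) - Real.log (Real.sin ((θ-φ)/2)))

lemma hasDerivAt_Gfun {r φ θ : ℝ} (hφ0 : 0 < φ) (hφπ : φ < π) (hr : Real.cos φ = r)
    (hθ0 : 0 ≤ θ) (hθπ : θ ≤ π) (hθφ : θ ≠ φ) :
    HasDerivAt (Gfun r φ) (Real.sin θ ^ 2 / (Real.cos θ - r)) θ := by
  have hsφ : Real.sqrt (1 - r^2) = Real.sin φ := by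
    rw [← hr, show (1:ℝ) - Real.cos φ ^ 2 = Real.sin φ ^ 2 by
      have := Real.sin_sq_add_cos_sq φ; linarith]
    exact Real.sqrt_sq (Real.sin_nonneg_of_nonneg_of_le_pi hφ0.le hφπ.le)
  set A := (θ+φ)/2 with hA
  set B := (θ-φ)/2 with hB
  have hsA : Real.sin A ≠ 0 := by
    have h1 : 0 < A := by rw [hA]; positivity
    have h2 : A < π := by rw [hA]; linarith
    exact (Real.sin_pos_of_pos_of_lt_pi h1 h2).ne'
  have hsB : Real.sin B ≠ 0 := by
    rcases lt_or_gt_of_ne hθφ with h | h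
    · have h1 : -π < B := by rw [hB]; linarith
      have h2 : B < 0 := by rw [hB]; linarith
      exact (Real.sin_neg_of_neg_of_neg_pi_lt h2 h1).ne
    · have h1 : 0 < B := by rw [hB]; linarith
      have h2 : B < π := by rw [hB]; linarith
      exact (Real.sin_pos_of_pos_of_lt_pi h1 h2).ne'
  have hcθr : Real.cos θ - r ≠ 0 := by
    intro h
    apply hθφ
    apply Real.injOn_cos ⟨hθ0, hθπ⟩ ⟨hφ0.le, hφπ.le⟩
    rw [hr]; linarith
  -- derivative construction
  have h1 : HasDerivAt (fun θ : ℝ => -Real.sin θ - θ * r) (-Real.cos θ - r) θ := by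
    have := ((Real.hasDerivAt_sin θ).neg).sub ((hasDerivAt_id' θ).mul_const r)
    exact this.congr_deriv (by ring)
  have h2 : HasDerivAt (fun θ : ℝ => (θ+φ)/2) (1/2) θ := by
    have := ((hasDerivAt_id θ).add_const φ).div_const 2
    simpa using this
  have h3 : HasDerivAt (fun θ : ℝ => (θ-φ)/2) (1/2) θ := by
    have := ((hasDerivAt_id θ).sub_const φ).div_const 2
    simpa using this
  have hlogA : HasDerivAt (fun θ : ℝ => Real.log (Real.sin ((θ+φ)/2)))
      ((Real.cos A * (1/2)) / Real.sin A) θ := (h2.sin).log hsA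
  have hlogB : HasDerivAt (fun θ : ℝ => Real.log (Real.sin ((θ-φ)/2)))
      ((Real.cos B * (1/2)) / Real.sin B) θ := (h3.sin).log hsB
  have hG : HasDerivAt (Gfun r φ)
      (-Real.cos θ - r + Real.sqrt (1-r^2) *
        ((Real.cos A * (1/2)) / Real.sin A - (Real.cos B * (1/2)) / Real.sin B)) θ :=
    h1.add ((hlogA.sub hlogB).const_mul _)
  convert hG using 1
  -- now the identity
  have key1 : Real.cos θ - r = -2 * Real.sin A * Real.sin B := by
    rw [← hr]
    exact Real.cos_sub_cos θ φ
  have key2 : (Real.cos A * (1/2)) / Real.sin A - (Real.cos B * (1/2)) / Real.sin B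
      = Real.sin φ / (Real.cos θ - r) := by
    have e1 : (Real.cos A * (1/2)) / Real.sin A - (Real.cos B * (1/2)) / Real.sin B
        = -(Real.sin A * Real.cos B - Real.cos A * Real.sin B) / (2*(Real.sin A * Real.sin B)) := by
      field_simp
      ring
    have e2 : Real.sin A * Real.cos B - Real.cos A * Real.sin B = Real.sin φ := by
      rw [← Real.sin_sub]
      congr 1
      rw [hA, hB]; ring
    rw [e1, e2, key1, neg_div,
      show (-2:ℝ)*Real.sin A*Real.sin B = -(2*(Real.sin A*Real.sin B)) by ring, div_neg]
  rw [key2, hsφ]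
  have hs2 : Real.sin φ ^ 2 = 1 - r^2 := by
    have := Real.sin_sq_add_cos_sq φ
    rw [hr] at this; linarith
  have ht2 : Real.sin θ ^ 2 = 1 - Real.cos θ^2 := by
    have := Real.sin_sq_add_cos_sq θ; linarith
  field_simp
  nlinarith [hs2, ht2]

lemma cont_sqrt_div {r a b : ℝ} (h : ∀ s ∈ Icc a b, s - r ≠ 0) :
    ContinuousOn (fun s => Real.sqrt (1-s^2)/(s-r)) (Icc a b) := by
  apply ContinuousOn.div
  · exact (Real.continuous_sqrt.comp (by continuity)).continuousOn
  · exact (continuous_id.sub continuous_const).continuousOn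
  · exact h

lemma base_tendsto (r : ℝ) (hr : r ∈ Set.Ioo (-1:ℝ) 1) :
    Tendsto (fun ε : ℝ =>
        (∫ s in (-1:ℝ)..(r-ε), Real.sqrt (1-s^2)/(s-r)) +
        ∫ s in (r+ε)..(1:ℝ), Real.sqrt (1-s^2)/(s-r))
      (nhdsWithin 0 (Set.Ioi 0)) (nhds (-π * r)) := by
  obtain ⟨hr1, hr2⟩ := hr
  set φ := Real.arccos r with hφ
  have hφ0 : 0 < φ := Real.arccos_pos.2 hr2
  have hφπ : φ < π := lt_of_le_of_ne (Real.arccos_le_pi r)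
    (fun h => by have := Real.arccos_eq_pi.1 h; linarith)
  have hcos : Real.cos φ = r := Real.cos_arccos hr1.le hr2.le
  have hδ : (0:ℝ) < min (1-r) (1+r) := by
    apply lt_min <;> linarith
  have hGπ : Gfun r φ π = -π * r := by
    unfold Gfun
    rw [show (π+φ)/2 = π/2 + φ/2 by ring, show (π-φ)/2 = π/2 - φ/2 by ring,
      Real.sin_add, Real.sin_pi_div_two, Real.cos_pi_div_two, Real.sin_pi_div_two_sub, Real.sin_pi]
    ring
  have hG0 : Gfun r φ 0 = 0 := by
    unfold Gfun
    rw [show (0+φ)/2 = φ/2 by ring, show (0-φ)/2 = -(φ/2) by ring,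
      Real.sin_neg, Real.log_neg_eq_log, Real.sin_zero]
    ring
  -- eventual identity
  have hev : ∀ᶠ ε in nhdsWithin (0:ℝ) (Set.Ioi 0),
      (∫ s in (-1:ℝ)..(r-ε), Real.sqrt (1-s^2)/(s-r)) +
        (∫ s in (r+ε)..(1:ℝ), Real.sqrt (1-s^2)/(s-r))
      = -π * r + (Gfun r φ (Real.arccos (r+ε)) - Gfun r φ (Real.arccos (r-ε))) := by
    filter_upwards [Ioo_mem_nhdsGT hδ] with ε hε
    obtain ⟨hε0, hεδ⟩ := hε
    have hεa : ε < 1 - r := lt_of_lt_of_le hεδ (min_le_left _ _)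
    have hεb : ε < 1 + r := lt_of_lt_of_le hεδ (min_le_right _ _)
    set α := Real.arccos (r+ε) with hα
    set β := Real.arccos (r-ε) with hβ
    have hcα : Real.cos α = r + ε := Real.cos_arccos (by linarith) (by linarith)
    have hcβ : Real.cos β = r - ε := Real.cos_arccos (by linarith) (by linarith)
    have hαφ : α < φ := Real.strictAntiOn_arccos
      ⟨by linarith, by linarith⟩ ⟨by linarith, by linarith⟩ (by linarith)
    have hφβ : φ < β := Real.strictAntiOn_arccos
      ⟨by linarith, by linarith⟩ ⟨by linarith, by linarith⟩ (by linarith)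
    have hα0 : 0 ≤ α := Real.arccos_nonneg _
    have hβπ : β ≤ π := Real.arccos_le_pi _
    have hαπ : α ≤ π := le_of_lt (hαφ.trans hφπ)
    have hβ0 : 0 ≤ β := le_of_lt (hφ0.trans hφβ)
    -- left integral
    have hL : (∫ s in (-1:ℝ)..(r-ε), Real.sqrt (1-s^2)/(s-r))
        = Gfun r φ π - Gfun r φ β := by
      have hsub : (∫ s in (-1:ℝ)..(r-ε), Real.sqrt (1-s^2)/(s-r))
          = ∫ θ in β..π, (Real.sqrt (1-Real.cos θ^2)/(Real.cos θ-r)) * Real.sin θ := by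
        rw [show (-1:ℝ) = Real.cos π by simp, ← hcβ]
        apply subst_cos hβ0 hβπ le_rfl
        rw [Real.cos_pi, hcβ]
        exact cont_sqrt_div (fun s hs => sub_ne_zero.2 (by intro h; rw [h] at hs; linarith [hs.2]))
      rw [hsub]
      have hcong : ∀ θ ∈ uIcc β π,
          (Real.sqrt (1-Real.cos θ^2)/(Real.cos θ-r)) * Real.sin θ
            = Real.sin θ^2 / (Real.cos θ - r) := by
        intro θ hθ
        rw [uIcc_of_le hβπ] at hθ
        rw [sqrt_one_sub_cos_sq (hβ0.trans hθ.1) hθ.2]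
        ring
      rw [intervalIntegral.integral_congr hcong]
      apply intervalIntegral.integral_eq_sub_of_hasDerivAt
      · intro θ hθ
        rw [uIcc_of_le hβπ] at hθ
        exact hasDerivAt_Gfun hφ0 hφπ hcos (hβ0.trans hθ.1) hθ.2
          (fun h => absurd (h ▸ hθ.1) (not_le.2 hφβ))
      · apply ContinuousOn.intervalIntegrable
        rw [uIcc_of_le hβπ]
        apply ContinuousOn.div
        · exact (Real.continuous_sin.pow 2).continuousOn
        · exact (Real.continuous_cos.sub continuous_const).continuousOn
        · intro θ hθ
          have : Real.cos θ ≤ Real.cos β :=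
            Real.cos_le_cos_of_nonneg_of_le_pi hβ0 hθ.2 hθ.1
          rw [hcβ] at this
          intro h; rw [sub_eq_zero] at h; rw [h] at this; linarith
    -- right integral
    have hR : (∫ s in (r+ε)..(1:ℝ), Real.sqrt (1-s^2)/(s-r))
        = Gfun r φ α - Gfun r φ 0 := by
      have hsub : (∫ s in (r+ε)..(1:ℝ), Real.sqrt (1-s^2)/(s-r))
          = ∫ θ in (0:ℝ)..α, (Real.sqrt (1-Real.cos θ^2)/(Real.cos θ-r)) * Real.sin θ := by
        rw [show (1:ℝ) = Real.cos 0 by simp, ← hcα]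
        apply subst_cos le_rfl hα0 hαπ
        rw [Real.cos_zero, hcα]
        exact cont_sqrt_div (fun s hs => sub_ne_zero.2 (by intro h; rw [h] at hs; linarith [hs.1]))
      rw [hsub]
      have hcong : ∀ θ ∈ uIcc (0:ℝ) α,
          (Real.sqrt (1-Real.cos θ^2)/(Real.cos θ-r)) * Real.sin θ
            = Real.sin θ^2 / (Real.cos θ - r) := by
        intro θ hθ
        rw [uIcc_of_le hα0] at hθ
        rw [sqrt_one_sub_cos_sq hθ.1 (hθ.2.trans hαπ)]
        ring
      rw [intervalIntegral.integral_congr hcong]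
      apply intervalIntegral.integral_eq_sub_of_hasDerivAt
      · intro θ hθ
        rw [uIcc_of_le hα0] at hθ
        exact hasDerivAt_Gfun hφ0 hφπ hcos hθ.1 (hθ.2.trans hαπ)
          (fun h => absurd (h ▸ hθ.2) (not_le.2 hαφ))
      · apply ContinuousOn.intervalIntegrable
        rw [uIcc_of_le hα0]
        apply ContinuousOn.div
        · exact (Real.continuous_sin.pow 2).continuousOn
        · exact (Real.continuous_cos.sub continuous_const).continuousOn
        · intro θ hθ
          have : Real.cos α ≤ Real.cos θ :=
            Real.cos_le_cos_of_nonneg_of_le_pi hθ.1 hαπ hθ.2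
          rw [hcα] at this
          intro h; rw [sub_eq_zero] at h; rw [h] at this; linarith
    rw [hL, hR, hGπ, hG0]
    ring
  -- the remainder tends to 0
  have hαt : Tendsto (fun ε : ℝ => Real.arccos (r+ε)) (nhdsWithin 0 (Set.Ioi 0)) (nhds φ) := by
    have : Tendsto (fun ε : ℝ => Real.arccos (r+ε)) (nhds 0) (nhds (Real.arccos (r+0))) :=
      (Real.continuous_arccos.comp (continuous_const.add continuous_id)).tendsto 0
    simpa using this.mono_left nhdsWithin_le_nhds
  have hβt : Tendsto (fun ε : ℝ => Real.arccos (r-ε)) (nhdsWithin 0 (Set.Ioi 0)) (nhds φ) := by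
    have : Tendsto (fun ε : ℝ => Real.arccos (r-ε)) (nhds 0) (nhds (Real.arccos (r-0))) :=
      (Real.continuous_arccos.comp (continuous_const.sub continuous_id)).tendsto 0
    simpa using this.mono_left nhdsWithin_le_nhds
  -- slope limits for arccos
  have hd : HasDerivAt Real.arccos (-(1/Real.sqrt (1-r^2))) r :=
    Real.hasDerivAt_arccos (by intro h; rw [h] at hr1; linarith) hr2.ne
  have hdneg : -(1/Real.sqrt (1-r^2)) < 0 := by
    have h1 : (0:ℝ) < 1 - r^2 := by nlinarith
    have := Real.sqrt_pos.2 h1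
    simp only [neg_neg, neg_lt, neg_zero]
    positivity
  have hslope := hasDerivAt_iff_tendsto_slope.1 hd
  have hmap1 : Tendsto (fun ε : ℝ => r + ε) (nhdsWithin 0 (Set.Ioi 0))
      (nhdsWithin r {r}ᶜ) := by
    rw [tendsto_nhdsWithin_iff]
    constructor
    · have : Tendsto (fun ε : ℝ => r + ε) (nhds 0) (nhds (r+0)) :=
        (continuous_const.add continuous_id).tendsto 0
      simpa using this.mono_left nhdsWithin_le_nhds
    · filter_upwards [self_mem_nhdsWithin] with ε hε
      simp only [Set.mem_compl_iff, Set.mem_singleton_iff]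
      have : (0:ℝ) < ε := hε
      intro h; nlinarith [h]
  have hmap2 : Tendsto (fun ε : ℝ => r - ε) (nhdsWithin 0 (Set.Ioi 0))
      (nhdsWithin r {r}ᶜ) := by
    rw [tendsto_nhdsWithin_iff]
    constructor
    · have : Tendsto (fun ε : ℝ => r - ε) (nhds 0) (nhds (r-0)) :=
        (continuous_const.sub continuous_id).tendsto 0
      simpa using this.mono_left nhdsWithin_le_nhds
    · filter_upwards [self_mem_nhdsWithin] with ε hε
      simp only [Set.mem_compl_iff, Set.mem_singleton_iff]
      have : (0:ℝ) < ε := hε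
      intro h; nlinarith [h]
  have D1 : Tendsto (fun ε : ℝ => (Real.arccos (r+ε) - φ)/ε) (nhdsWithin 0 (Set.Ioi 0))
      (nhds (-(1/Real.sqrt (1-r^2)))) := by
    have := hslope.comp hmap1
    refine this.congr fun ε => ?_
    simp only [Function.comp, slope_def_field, hφ]
    congr 1
    ring
  have D2 : Tendsto (fun ε : ℝ => (Real.arccos (r-ε) - φ)/ε) (nhdsWithin 0 (Set.Ioi 0))
      (nhds (-(-(1/Real.sqrt (1-r^2))))) := by
    have h0 := hslope.comp hmap2
    have := h0.neg
    refine this.congr fun ε => ?_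
    simp only [Function.comp, slope_def_field, hφ]
    rw [show r - ε - r = -ε by ring, div_neg, neg_neg]
  have hpos : (0:ℝ) < 1/Real.sqrt (1-r^2) := by
    have h1 : (0:ℝ) < 1 - r^2 := by nlinarith
    have := Real.sqrt_pos.2 h1
    positivity
  -- ratio limit
  have C1 : Tendsto (fun ε : ℝ => (Real.arccos (r+ε) - φ)/(Real.arccos (r-ε) - φ))
      (nhdsWithin 0 (Set.Ioi 0)) (nhds (-1)) := by
    have hne : -(-(1/Real.sqrt (1-r^2))) ≠ 0 := by
      rw [neg_neg]; exact hpos.ne'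
    have h := D1.div D2 hne
    have hval : -(1/Real.sqrt (1-r^2)) / -(-(1/Real.sqrt (1-r^2))) = -1 := by
      rw [neg_neg, neg_div, div_self hpos.ne']
    rw [hval] at h
    refine h.congr' ?_
    filter_upwards [self_mem_nhdsWithin] with ε hε
    have hε0 : (0:ℝ) < ε := hε
    simp only [Pi.div_apply]
    rw [div_div_div_cancel_right₀ hε0.ne']
  -- sinc limit
  have S : Tendsto (fun x : ℝ => Real.sin x / x) (nhdsWithin 0 {(0:ℝ)}ᶜ) (nhds 1) := by
    have hs := hasDerivAt_iff_tendsto_slope.1 (Real.hasDerivAt_sin 0)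
    rw [Real.cos_zero] at hs
    refine hs.congr fun x => ?_
    simp [slope_def_field]
  -- eventual basic facts about u and v
  have hev2 : ∀ᶠ ε in nhdsWithin (0:ℝ) (Set.Ioi 0),
      (Real.arccos (r+ε) - φ)/2 < 0 ∧ 0 < (Real.arccos (r-ε) - φ)/2 ∧
      (Real.arccos (r-ε) - φ)/2 < π/2 := by
    filter_upwards [Ioo_mem_nhdsGT hδ] with ε hε
    obtain ⟨hε0, hεδ⟩ := hε
    have hεa : ε < 1 - r := lt_of_lt_of_le hεδ (min_le_left _ _)
    have hεb : ε < 1 + r := lt_of_lt_of_le hεδ (min_le_right _ _)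
    have hαφ : Real.arccos (r+ε) < φ := Real.strictAntiOn_arccos
      ⟨by linarith, by linarith⟩ ⟨by linarith, by linarith⟩ (by linarith)
    have hφβ : φ < Real.arccos (r-ε) := Real.strictAntiOn_arccos
      ⟨by linarith, by linarith⟩ ⟨by linarith, by linarith⟩ (by linarith)
    have hβπ : Real.arccos (r-ε) ≤ π := Real.arccos_le_pi _
    exact ⟨by linarith, by linarith, by linarith⟩
  have hu : Tendsto (fun ε : ℝ => (Real.arccos (r+ε) - φ)/2) (nhdsWithin 0 (Set.Ioi 0))
      (nhdsWithin 0 {(0:ℝ)}ᶜ) := by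
    rw [tendsto_nhdsWithin_iff]
    constructor
    · have := (hαt.sub (tendsto_const_nhds (x := φ))).div_const 2
      simpa using this
    · filter_upwards [hev2] with ε h
      simp only [Set.mem_compl_iff, Set.mem_singleton_iff]
      exact h.1.ne
  have hv : Tendsto (fun ε : ℝ => (Real.arccos (r-ε) - φ)/2) (nhdsWithin 0 (Set.Ioi 0))
      (nhdsWithin 0 {(0:ℝ)}ᶜ) := by
    rw [tendsto_nhdsWithin_iff]
    constructor
    · have := (hβt.sub (tendsto_const_nhds (x := φ))).div_const 2
      simpa using this
    · filter_upwards [hev2] with ε h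
      simp only [Set.mem_compl_iff, Set.mem_singleton_iff]
      exact h.2.1.ne'
  have C2 := S.comp hu
  have C3 : Tendsto (fun ε : ℝ => ((Real.arccos (r-ε) - φ)/2) /
      Real.sin ((Real.arccos (r-ε) - φ)/2)) (nhdsWithin 0 (Set.Ioi 0)) (nhds 1) := by
    have := (S.comp hv).inv₀ one_ne_zero
    rw [inv_one] at this
    refine this.congr fun ε => ?_
    rw [Function.comp, inv_div]
  -- the main ratio of sines
  have main : Tendsto (fun ε : ℝ =>
      Real.sin ((Real.arccos (r+ε) - φ)/2) / Real.sin ((Real.arccos (r-ε) - φ)/2))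
      (nhdsWithin 0 (Set.Ioi 0)) (nhds (-1)) := by
    have h := (C2.mul C3).mul C1
    rw [show ((1:ℝ) * 1) * (-1) = -1 by norm_num] at h
    refine h.congr' ?_
    filter_upwards [hev2] with ε hev2'
    obtain ⟨hu0, hv0, hvπ⟩ := hev2'
    have hvs : Real.sin ((Real.arccos (r-ε) - φ)/2) ≠ 0 :=
      (Real.sin_pos_of_pos_of_lt_pi hv0 (by linarith [Real.pi_pos])).ne'
    have hune : (Real.arccos (r+ε) - φ)/2 ≠ 0 := hu0.ne
    have hvne : (Real.arccos (r-ε) - φ)/2 ≠ 0 := hv0.ne'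
    simp only [Function.comp]
    rw [show (Real.arccos (r+ε) - φ)/(Real.arccos (r-ε) - φ)
        = ((Real.arccos (r+ε) - φ)/2)/((Real.arccos (r-ε) - φ)/2) by
      rw [div_div_div_cancel_right₀ (two_ne_zero)]]
    set u := (Real.arccos (r+ε) - φ)/2 with hu'
    set v := (Real.arccos (r-ε) - φ)/2 with hv'
    rw [show Real.sin u / u * (v / Real.sin v) * (u / v)
        = Real.sin u / Real.sin v * (u / u) * (v / v) by ring,
      div_self hune, div_self hvne, mul_one, mul_one]
  -- log difference of singular terms tends to 0
  have TL2 : Tendsto (fun ε : ℝ =>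
      Real.log (Real.sin ((Real.arccos (r+ε) - φ)/2)) -
      Real.log (Real.sin ((Real.arccos (r-ε) - φ)/2)))
      (nhdsWithin 0 (Set.Ioi 0)) (nhds 0) := by
    have hlog : Tendsto (fun ε : ℝ =>
        Real.log (Real.sin ((Real.arccos (r+ε) - φ)/2) /
          Real.sin ((Real.arccos (r-ε) - φ)/2)))
        (nhdsWithin 0 (Set.Ioi 0)) (nhds 0) := by
      have hc : ContinuousAt Real.log (-1) := Real.continuousAt_log (by norm_num)
      have := hc.tendsto.comp main
      rw [show Real.log (-1) = 0 by rw [Real.log_neg_eq_log, Real.log_one]] at this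
      exact this
    refine hlog.congr' ?_
    filter_upwards [hev2] with ε hev2'
    obtain ⟨hu0, hv0, hvπ⟩ := hev2'
    have hus : Real.sin ((Real.arccos (r+ε) - φ)/2) ≠ 0 := by
      apply ne_of_lt
      apply Real.sin_neg_of_neg_of_neg_pi_lt hu0
      have h1 : 0 ≤ Real.arccos (r+ε) := Real.arccos_nonneg _
      have h2 : φ ≤ π := hφπ.le
      nlinarith [Real.pi_pos]
    have hvs : Real.sin ((Real.arccos (r-ε) - φ)/2) ≠ 0 :=
      (Real.sin_pos_of_pos_of_lt_pi hv0 (by linarith [Real.pi_pos])).ne'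
    rw [Real.log_div hus hvs]
  -- log difference of regular terms tends to 0
  have hct : ContinuousAt (fun x : ℝ => Real.log (Real.sin ((x+φ)/2))) φ := by
    apply ContinuousAt.log
    · exact (Real.continuous_sin.comp (by continuity)).continuousAt
    · rw [show (φ+φ)/2 = φ by ring]
      exact (Real.sin_pos_of_pos_of_lt_pi hφ0 hφπ).ne'
  have TL1 : Tendsto (fun ε : ℝ =>
      Real.log (Real.sin ((Real.arccos (r+ε)+φ)/2)) -
      Real.log (Real.sin ((Real.arccos (r-ε)+φ)/2)))
      (nhdsWithin 0 (Set.Ioi 0)) (nhds 0) := by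
    have h := (hct.tendsto.comp hαt).sub (hct.tendsto.comp hβt)
    simpa using h
  have hcp : ContinuousAt (fun x : ℝ => -Real.sin x - x*r) φ := by
    apply ContinuousAt.sub
    · exact Real.continuous_sin.continuousAt.neg
    · exact (continuous_id.mul continuous_const).continuousAt
  have TP : Tendsto (fun ε : ℝ =>
      (-Real.sin (Real.arccos (r+ε)) - (Real.arccos (r+ε))*r) -
      (-Real.sin (Real.arccos (r-ε)) - (Real.arccos (r-ε))*r))
      (nhdsWithin 0 (Set.Ioi 0)) (nhds 0) := by
    have h := (hcp.tendsto.comp hαt).sub (hcp.tendsto.comp hβt)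
    simpa using h
  have TB : Tendsto (fun ε : ℝ =>
      Gfun r φ (Real.arccos (r+ε)) - Gfun r φ (Real.arccos (r-ε)))
      (nhdsWithin 0 (Set.Ioi 0)) (nhds 0) := by
    have h := TP.add ((TL1.sub TL2).const_mul (Real.sqrt (1-r^2)))
    rw [show (0:ℝ) + Real.sqrt (1-r^2) * (0 - 0) = 0 by ring] at h
    refine h.congr fun ε => ?_
    unfold Gfun
    ring
  have hfinal := (tendsto_const_nhds (x := -π*r)).add TB
  rw [add_zero] at hfinal
  have hev' : (fun ε : ℝ => (∫ s in (-1:ℝ)..(r-ε), Real.sqrt (1-s^2)/(s-r)) +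
      ∫ s in (r+ε)..(1:ℝ), Real.sqrt (1-s^2)/(s-r)) =ᶠ[nhdsWithin 0 (Set.Ioi 0)]
      (fun ε => -π * r + (Gfun r φ (Real.arccos (r+ε)) - Gfun r φ (Real.arccos (r-ε)))) := hev
  exact Tendsto.congr' hev'.symm hfinal

lemma U_step (k : ℕ) (r s : ℝ) (hs : s - r ≠ 0) :
    (U ℝ ((k:ℤ)+2)).eval s * Real.sqrt (1 - s ^ 2) / (s - r)
    = 2 * ((U ℝ ((k:ℤ)+1)).eval s * Real.sqrt (1 - s ^ 2))
      + (2*r) * ((U ℝ ((k:ℤ)+1)).eval s * Real.sqrt (1 - s ^ 2) / (s - r))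
      - (U ℝ (k:ℤ)).eval s * Real.sqrt (1 - s ^ 2) / (s - r) := by
  rw [Polynomial.Chebyshev.U_add_two]
  simp only [Polynomial.eval_sub, Polynomial.eval_mul, Polynomial.eval_ofNat, Polynomial.eval_X]
  field_simp
  ring

lemma up_intInt (p : Polynomial ℝ) {r a b : ℝ} (h : ∀ s ∈ Set.uIcc a b, s - r ≠ 0) :
    IntervalIntegrable (fun s => p.eval s * Real.sqrt (1 - s ^ 2) / (s - r))
      MeasureTheory.volume a b := by
  apply ContinuousOn.intervalIntegrable
  apply ContinuousOn.div
  · exact ((Polynomial.continuous p).mul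
      (Real.continuous_sqrt.comp (by continuity))).continuousOn
  · exact (continuous_id.sub continuous_const).continuousOn
  · exact h

lemma hne_left {r ε : ℝ} (hr1 : -1 < r) (hε : 0 < ε) :
    ∀ s ∈ Set.uIcc (-1:ℝ) (r-ε), s - r ≠ 0 := by
  intro s hs
  have h2 : s ≤ (-1) ⊔ (r-ε) := hs.2
  have : s < r := lt_of_le_of_lt h2 (sup_lt_iff.2 ⟨by linarith, by linarith⟩)
  exact sub_ne_zero.2 this.ne

lemma hne_right {r ε : ℝ} (hr2 : r < 1) (hε : 0 < ε) :
    ∀ s ∈ Set.uIcc (r+ε) (1:ℝ), s - r ≠ 0 := by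
  intro s hs
  have h1 : (r+ε) ⊓ 1 ≤ s := hs.1
  have : r < s := lt_of_lt_of_le (lt_inf_iff.2 ⟨by linarith, hr2⟩) h1
  exact sub_ne_zero.2 this.ne'

lemma split_interval (k : ℕ) {r a b : ℝ} (h : ∀ s ∈ Set.uIcc a b, s - r ≠ 0) :
    ∫ s in a..b, (U ℝ ((k:ℤ)+2)).eval s * Real.sqrt (1 - s ^ 2) / (s - r)
    = 2*(∫ s in a..b, (U ℝ ((k:ℤ)+1)).eval s * Real.sqrt (1 - s ^ 2))
      + (2*r)*(∫ s in a..b, (U ℝ ((k:ℤ)+1)).eval s * Real.sqrt (1 - s ^ 2) / (s - r))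
      - ∫ s in a..b, (U ℝ (k:ℤ)).eval s * Real.sqrt (1 - s ^ 2) / (s - r) := by
  have hg : IntervalIntegrable (fun s => (U ℝ ((k:ℤ)+1)).eval s * Real.sqrt (1 - s ^ 2))
      MeasureTheory.volume a b :=
    (((Polynomial.continuous _).mul
      (Real.continuous_sqrt.comp (by continuity)))).intervalIntegrable a b
  have hM := up_intInt (U ℝ ((k:ℤ)+1)) h
  have hK := up_intInt (U ℝ (k:ℤ)) h
  rw [intervalIntegral.integral_congr (g := fun s =>
      2 * ((U ℝ ((k:ℤ)+1)).eval s * Real.sqrt (1 - s ^ 2))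
      + (2*r) * ((U ℝ ((k:ℤ)+1)).eval s * Real.sqrt (1 - s ^ 2) / (s - r))
      - (U ℝ (k:ℤ)).eval s * Real.sqrt (1 - s ^ 2) / (s - r))
    (fun s hs => U_step k r s (h s hs))]
  rw [intervalIntegral.integral_sub ((hg.const_mul 2).add (hM.const_mul (2*r))) hK,
    intervalIntegral.integral_add (hg.const_mul 2) (hM.const_mul (2*r)),
    intervalIntegral.integral_const_mul, intervalIntegral.integral_const_mul]

lemma split_interval_one {r a b : ℝ} (h : ∀ s ∈ Set.uIcc a b, s - r ≠ 0) :
    ∫ s in a..b, (U ℝ ((1:ℕ):ℤ)).eval s * Real.sqrt (1 - s ^ 2) / (s - r)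
    = 2*(∫ s in a..b, Real.sqrt (1 - s ^ 2))
      + (2*r)*(∫ s in a..b, Real.sqrt (1 - s ^ 2) / (s - r)) := by
  have hg : IntervalIntegrable (fun s => Real.sqrt (1 - s ^ 2)) MeasureTheory.volume a b :=
    (Real.continuous_sqrt.comp (by continuity)).intervalIntegrable a b
  have hM : IntervalIntegrable (fun s => Real.sqrt (1 - s ^ 2) / (s - r))
      MeasureTheory.volume a b := by
    apply ContinuousOn.intervalIntegrable
    apply ContinuousOn.div
    · exact (Real.continuous_sqrt.comp (by continuity)).continuousOn
    · exact (continuous_id.sub continuous_const).continuousOn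
    · exact h
  rw [intervalIntegral.integral_congr (g := fun s =>
      2 * Real.sqrt (1 - s ^ 2) + (2*r) * (Real.sqrt (1 - s ^ 2) / (s - r))) ?_]
  · rw [intervalIntegral.integral_add (hg.const_mul 2) (hM.const_mul (2*r)),
      intervalIntegral.integral_const_mul, intervalIntegral.integral_const_mul]
  · intro s hs
    have hsr := h s hs
    simp only [Polynomial.Chebyshev.U_one, Polynomial.eval_mul, Polynomial.eval_ofNat,
      Polynomial.eval_X, Nat.cast_one]
    field_simp
    ring

lemma key_tendsto : ∀ (n : ℕ), ∀ r ∈ Set.Ioo (-1:ℝ) 1,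
    Tendsto (fun ε : ℝ =>
      (∫ s in (-1:ℝ)..(r - ε),
          (Polynomial.Chebyshev.U ℝ n).eval s * Real.sqrt (1 - s ^ 2) / (s - r)) +
      ∫ s in (r + ε)..(1:ℝ),
          (Polynomial.Chebyshev.U ℝ n).eval s * Real.sqrt (1 - s ^ 2) / (s - r))
      (nhdsWithin 0 (Set.Ioi 0))
      (nhds (-π * (Polynomial.Chebyshev.T ℝ ((n:ℤ)+1)).eval r)) := by
  intro n
  induction n using Nat.twoStepInduction with
  | zero =>
    intro r hr
    have h := base_tendsto r hr
    have hval : -π * r = -π * (Polynomial.Chebyshev.T ℝ (((0:ℕ):ℤ)+1)).eval r := by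
      norm_num [Polynomial.Chebyshev.T_one]
    rw [hval] at h
    refine h.congr fun ε => ?_
    have e : ∀ a b : ℝ, (∫ s in a..b, Real.sqrt (1-s^2)/(s-r))
        = ∫ s in a..b, (Polynomial.Chebyshev.U ℝ ((0:ℕ):ℤ)).eval s
            * Real.sqrt (1 - s ^ 2) / (s - r) := by
      intro a b
      apply intervalIntegral.integral_congr
      intro s _
      norm_num [Polynomial.Chebyshev.U_zero]
    rw [e, e]
  | one =>
    intro r hr
    have hbase := base_tendsto r hr
    have hsq : Tendsto (fun ε : ℝ =>
        (∫ s in (-1:ℝ)..(r-ε), Real.sqrt (1 - s ^ 2)) +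
          ∫ s in (r+ε)..(1:ℝ), Real.sqrt (1 - s ^ 2))
        (nhdsWithin 0 (Set.Ioi 0)) (nhds (π/2)) := by
      have h := split_tendsto r (g := fun s => Real.sqrt (1 - s ^ 2))
        (Real.continuous_sqrt.comp (by continuity))
      rwa [integral_sqrt_one_sub_sq] at h
    have h := (hsq.const_mul 2).add (hbase.const_mul (2*r))
    have hval : 2*(π/2) + (2*r)*(-π*r)
        = -π * (Polynomial.Chebyshev.T ℝ (((1:ℕ):ℤ)+1)).eval r := by
      norm_num [show ((1:ℕ):ℤ)+1 = 2 by norm_num, Polynomial.Chebyshev.T_two]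
      ring
    rw [hval] at h
    refine h.congr' ?_
    filter_upwards [self_mem_nhdsWithin] with ε hε
    have hε0 : (0:ℝ) < ε := hε
    rw [split_interval_one (hne_left hr.1 hε0), split_interval_one (hne_right hr.2 hε0)]
    ring
  | more n ihn ihn1 =>
    intro r hr
    have hg : Tendsto (fun ε : ℝ =>
        (∫ s in (-1:ℝ)..(r-ε), (Polynomial.Chebyshev.U ℝ ((n:ℤ)+1)).eval s
            * Real.sqrt (1 - s ^ 2)) +
          ∫ s in (r+ε)..(1:ℝ), (Polynomial.Chebyshev.U ℝ ((n:ℤ)+1)).eval s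
            * Real.sqrt (1 - s ^ 2))
        (nhdsWithin 0 (Set.Ioi 0)) (nhds 0) := by
      have h := split_tendsto r
        (g := fun s => (Polynomial.Chebyshev.U ℝ ((n:ℤ)+1)).eval s * Real.sqrt (1 - s ^ 2))
        ((Polynomial.continuous _).mul (Real.continuous_sqrt.comp (by continuity)))
      rwa [integral_U_sqrt n] at h
    have h := ((hg.const_mul 2).add ((ihn1 r hr).const_mul (2*r))).sub (ihn r hr)
    have hval : 2*(0:ℝ) + (2*r)*(-π * (Polynomial.Chebyshev.T ℝ (((n+1:ℕ):ℤ)+1)).eval r)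
        - (-π * (Polynomial.Chebyshev.T ℝ (((n:ℕ):ℤ)+1)).eval r)
        = -π * (Polynomial.Chebyshev.T ℝ (((n+2:ℕ):ℤ)+1)).eval r := by
      have hT := Polynomial.Chebyshev.T_add_two ℝ ((n:ℤ)+1)
      rw [show (((n+2:ℕ)):ℤ)+1 = ((n:ℤ)+1)+2 by push_cast; ring,
        show (((n+1:ℕ)):ℤ)+1 = ((n:ℤ)+1)+1 by push_cast; ring, hT]
      simp only [Polynomial.eval_sub, Polynomial.eval_mul, Polynomial.eval_ofNat,
        Polynomial.eval_X]
      ring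
    rw [hval] at h
    refine h.congr' ?_
    filter_upwards [self_mem_nhdsWithin] with ε hε
    have hε0 : (0:ℝ) < ε := hε
    have e2 : ((n+2:ℕ):ℤ) = (n:ℤ)+2 := by push_cast; ring
    have e1 : ((n+1:ℕ):ℤ) = (n:ℤ)+1 := by push_cast; ring
    simp only [e2, e1]
    rw [split_interval n (hne_left hr.1 hε0), split_interval n (hne_right hr.2 hε0)]
    ring

/-- Let `n ≥ 0` and let `F` be the Cauchy principal value
`F(r) = ⨍_{-1}^{1} U_n(s)√(1-s²)/(s-r) ds` on `(-1,1)`. Then `F` is differentiable on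
`(-1,1)` with `F'(r) = -π (n+1) U_n(r)`, the Hadamard finite-part integral
`⨎_{-1}^{1} U_n(s)√(1-s²)/(s-r)² ds`. -/
theorem hfp2_U_m1 (n : ℕ) (F : ℝ → ℝ)
    (hF : ∀ r ∈ Set.Ioo (-1 : ℝ) 1,
      Filter.Tendsto
        (fun ε : ℝ =>
          (∫ s in (-1 : ℝ)..(r - ε),
              (Polynomial.Chebyshev.U ℝ n).eval s * Real.sqrt (1 - s ^ 2) / (s - r)) +
          ∫ s in (r + ε)..(1 : ℝ),
              (Polynomial.Chebyshev.U ℝ n).eval s * Real.sqrt (1 - s ^ 2) / (s - r))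
        (nhdsWithin 0 (Set.Ioi 0)) (nhds (F r))) :
    ∀ r ∈ Set.Ioo (-1 : ℝ) 1,
      HasDerivAt F
        (-Real.pi * ((n : ℝ) + 1) * (Polynomial.Chebyshev.U ℝ (n : ℤ)).eval r) r := by
  intro r hr
  have hFr : ∀ r' ∈ Set.Ioo (-1:ℝ) 1,
      F r' = -π * (Polynomial.Chebyshev.T ℝ ((n:ℤ)+1)).eval r' := fun r' hr' =>
    tendsto_nhds_unique (hF r' hr') (key_tendsto n r' hr')
  have heq : F =ᶠ[nhds r] fun x => -π * (Polynomial.Chebyshev.T ℝ ((n:ℤ)+1)).eval x :=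
    Filter.eventually_of_mem (isOpen_Ioo.mem_nhds hr) (fun x hx => hFr x hx)
  have hT : HasDerivAt (fun x => -π * (Polynomial.Chebyshev.T ℝ ((n:ℤ)+1)).eval x)
      (-π * ((Polynomial.derivative (Polynomial.Chebyshev.T ℝ ((n:ℤ)+1))).eval r)) r :=
    (Polynomial.hasDerivAt _ r).const_mul (-π)
  have hder : Polynomial.derivative (Polynomial.Chebyshev.T ℝ ((n:ℤ)+1))
      = ((n:ℤ)+1 : ℤ) * Polynomial.Chebyshev.U ℝ (n:ℤ) := by
    rw [Polynomial.Chebyshev.T_derivative_eq_U]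
    norm_num
  have hD := hT.congr_of_eventuallyEq heq
  refine hD.congr_deriv ?_
  rw [hder]
  simp only [Polynomial.eval_mul, Polynomial.eval_intCast]
  push_cast
  ring
end
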